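/- arXiv:1906.10010 — 8 statements merged into one kernel-verified Lean document; each statement's English description precedes it below -/
import Mathlib

section
/- Let X : [0,L] → ℝ² be a unit-speed W^{2,∞} curve whose angle function φ (a continuous determination of the angle from X'(0) to X'(s)) is nondecreasing and satisfies 0 ≤ φ(s) ≤ Ω for all s, where 0 < Ω < π. Then for every s ∈ [0,L], the entire curve lies in the closed half-plane bounded by the tangent line at X(s) on the side of the inward normal N(s) = σ(X'(s)), where σ is rotation by π/2. Formally: for all s, t ∈ [0,L], ⟨X(t) − X(s), σ(X'(s))⟩ ≥ 0. -/
open Set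

/-- Convexity lemma: a unit-speed curve with nondecreasing tangent angle
`φ`, `φ(0) = 0`, `φ(L) = Ω ∈ (0,π)`, lies, for every `s`, in the closed half-plane
bounded by the tangent line at `X(s)`, on the side of the inward normal
`σ(X'(s)) = (−sin φ(s), cos φ(s))` (where `σ` is rotation by `π/2`). -/
theorem stmt1 (L Ω : ℝ) (hL : 0 < L) (hΩ : Ω ∈ Ioo 0 Real.pi)
    (X : ℝ → ℝ × ℝ) (φ : ℝ → ℝ)
    (hφc : ContinuousOn φ (Icc 0 L))
    (hmono : MonotoneOn φ (Icc 0 L))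
    (hφ0 : φ 0 = 0) (hφL : φ L = Ω)
    -- unit-speed parametrization with tangent angle φ
    (hX : ∀ s ∈ Icc 0 L,
      HasDerivWithinAt X (Real.cos (φ s), Real.sin (φ s)) (Icc 0 L) s) :
    ∀ s ∈ Icc 0 L, ∀ t ∈ Icc 0 L,
      ((X t).1 - (X s).1) * (-Real.sin (φ s)) +
      ((X t).2 - (X s).2) * Real.cos (φ s) ≥ 0 := by
  intro s hs t ht
  -- bounds on φ
  have h0L : (0 : ℝ) ∈ Icc 0 L := ⟨le_refl 0, hL.le⟩
  have hLL : L ∈ Icc 0 L := ⟨hL.le, le_refl L⟩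
  have hφ_lb : ∀ x ∈ Icc 0 L, 0 ≤ φ x := fun x hx => by
    have := hmono h0L hx hx.1; rw [hφ0] at this; exact this
  have hφ_ub : ∀ x ∈ Icc 0 L, φ x ≤ Ω := fun x hx => by
    have := hmono hx hLL hx.2; rwa [hφL] at this
  set g : ℝ → ℝ := fun u =>
    ((X u).1 - (X s).1) * (-Real.sin (φ s)) + ((X u).2 - (X s).2) * Real.cos (φ s) with hg
  have hXc : ContinuousOn X (Icc 0 L) := fun x hx => (hX x hx).continuousWithinAt
  have hgc : ContinuousOn g (Icc 0 L) := by
    apply ContinuousOn.add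
    · exact ((hXc.fst.sub continuousOn_const).mul continuousOn_const)
    · exact ((hXc.snd.sub continuousOn_const).mul continuousOn_const)
  have hg' : ∀ x ∈ Icc 0 L,
      HasDerivWithinAt g (Real.sin (φ x - φ s)) (Icc 0 L) x := by
    intro x hx
    have h := (hX x hx).hasFDerivWithinAt
    have h1 : HasDerivWithinAt (fun u => (X u).1) (Real.cos (φ x)) (Icc 0 L) x := by
      have := h.fst.hasDerivWithinAt
      simpa using this
    have h2 : HasDerivWithinAt (fun u => (X u).2) (Real.sin (φ x)) (Icc 0 L) x := by
      have := h.snd.hasDerivWithinAt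
      simpa using this
    have := (((h1.sub_const (X s).1).mul_const (-Real.sin (φ s))).add
      ((h2.sub_const (X s).2).mul_const (Real.cos (φ s))))
    have heq : Real.cos (φ x) * (-Real.sin (φ s)) + Real.sin (φ x) * Real.cos (φ s)
        = Real.sin (φ x - φ s) := by
      rw [Real.sin_sub]; ring
    rw [heq] at this
    exact this
  have hgs : g s = 0 := by simp [hg]
  rcases le_total s t with hst | hts
  · -- t ≥ s : g monotone on Icc s L
    have hsub : Icc s L ⊆ Icc 0 L := Icc_subset_Icc hs.1 le_rfl
    have hmonog : MonotoneOn g (Icc s L) := by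
      apply monotoneOn_of_hasDerivWithinAt_nonneg (convex_Icc s L) (hgc.mono hsub)
        (f' := fun x => Real.sin (φ x - φ s))
      · intro x hx
        rw [interior_Icc] at hx ⊢
        exact (hg' x (hsub (Ioo_subset_Icc_self hx))).mono (Ioo_subset_Icc_self.trans hsub)
      · intro x hx
        rw [interior_Icc] at hx
        have hx' : x ∈ Icc 0 L := hsub (Ioo_subset_Icc_self hx)
        apply Real.sin_nonneg_of_nonneg_of_le_pi
        · have := hmono hs hx' hx.1.le; linarith
        · have h1 := hφ_ub x hx'
          have h2 := hφ_lb s hs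
          linarith [hΩ.2]
    have := hmonog ⟨le_rfl, hs.2⟩ ⟨hst, ht.2⟩ hst
    rw [hgs] at this
    exact this
  · -- t ≤ s : g antitone on Icc 0 s
    have hsub : Icc 0 s ⊆ Icc 0 L := Icc_subset_Icc le_rfl hs.2
    have hantig : AntitoneOn g (Icc 0 s) := by
      apply antitoneOn_of_hasDerivWithinAt_nonpos (convex_Icc 0 s) (hgc.mono hsub)
        (f' := fun x => Real.sin (φ x - φ s))
      · intro x hx
        rw [interior_Icc] at hx ⊢
        exact (hg' x (hsub (Ioo_subset_Icc_self hx))).mono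
          ((Ioo_subset_Icc_self).trans hsub)
      · intro x hx
        rw [interior_Icc] at hx
        have hx' : x ∈ Icc 0 L := hsub (Ioo_subset_Icc_self hx)
        apply Real.sin_nonpos_of_nonpos_of_neg_pi_le
        · have := hmono hx' hs hx.2.le; linarith
        · have h1 := hφ_ub s hs
          have h2 := hφ_lb x hx'
          linarith [hΩ.2]
    have := hantig ⟨ht.1, hts⟩ ⟨hs.1, le_rfl⟩ hts
    rw [hgs] at this
    exact this
end

section
/- With the setup of the convexity lemma (unit-speed curve, nondecreasing angle φ with φ(0)=0, φ(L)=Ω ∈ (0,π)): fix s ∈ [0,L] and define γ(t) = ⟨X(t) − X(s), σ(X'(s))⟩. Then γ'(t) = sin(φ(t) − φ(s)) for all t, γ is nonincreasing on [0,s] and nondecreasing on [s,L], hence γ(t) ≥ 0 for all t ∈ [0,L]. -/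
open Set

/-- With the setup of the convexity lemma, fix `s ∈ [0,L]` and set
`γ(t) = ⟨X(t) − X(s), σ(X'(s))⟩`. Then `γ'(t) = sin(φ(t) − φ(s))`, `γ` is
nonincreasing on `[0,s]`, nondecreasing on `[s,L]`, and hence `γ ≥ 0` on `[0,L]`. -/
theorem stmt2 (L Ω : ℝ) (hL : 0 < L) (hΩ : Ω ∈ Ioo 0 Real.pi)
    (X : ℝ → ℝ × ℝ) (φ : ℝ → ℝ)
    (hφc : ContinuousOn φ (Icc 0 L))
    (hmono : MonotoneOn φ (Icc 0 L))
    (hφ0 : φ 0 = 0) (hφL : φ L = Ω)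
    (hX : ∀ t ∈ Icc 0 L,
      HasDerivWithinAt X (Real.cos (φ t), Real.sin (φ t)) (Icc 0 L) t)
    (s : ℝ) (hs : s ∈ Icc 0 L)
    (γ : ℝ → ℝ)
    (hγ : γ = fun t =>
      ((X t).1 - (X s).1) * (-Real.sin (φ s)) +
      ((X t).2 - (X s).2) * Real.cos (φ s)) :
    (∀ t ∈ Icc 0 L,
      HasDerivWithinAt γ (Real.sin (φ t - φ s)) (Icc 0 L) t) ∧
    AntitoneOn γ (Icc 0 s) ∧
    MonotoneOn γ (Icc s L) ∧
    ∀ t ∈ Icc 0 L, 0 ≤ γ t := by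
  have hderiv : ∀ t ∈ Icc 0 L,
      HasDerivWithinAt γ (Real.sin (φ t - φ s)) (Icc 0 L) t := by
    intro t ht
    have hf : HasDerivWithinAt (fun u => (X u).1) (Real.cos (φ t)) (Icc 0 L) t := by
      have h := ((ContinuousLinearMap.fst ℝ ℝ ℝ).hasFDerivAt).comp_hasFDerivWithinAt t
        (hX t ht).hasFDerivWithinAt
      have h' := h.hasDerivWithinAt
      simp at h'
      exact h'
    have hg : HasDerivWithinAt (fun u => (X u).2) (Real.sin (φ t)) (Icc 0 L) t := by
      have h := ((ContinuousLinearMap.snd ℝ ℝ ℝ).hasFDerivAt).comp_hasFDerivWithinAt t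
        (hX t ht).hasFDerivWithinAt
      have h' := h.hasDerivWithinAt
      simp at h'
      exact h'
    have h1 := (hf.sub_const (X s).1).mul_const (-Real.sin (φ s))
    have h2 := (hg.sub_const (X s).2).mul_const (Real.cos (φ s))
    have := h1.add h2
    rw [hγ]
    have e : Real.sin (φ t - φ s) = Real.cos (φ t) * -Real.sin (φ s) + Real.sin (φ t) * Real.cos (φ s) := by
      rw [Real.sin_sub]; ring
    rw [e]
    exact this
  -- bounds on φ
  have hφbound : ∀ t ∈ Icc 0 L, 0 ≤ φ t ∧ φ t ≤ Ω := by
    intro t ht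
    constructor
    · have := hmono (left_mem_Icc.2 hL.le) ht ht.1
      rwa [hφ0] at this
    · have := hmono ht (right_mem_Icc.2 hL.le) ht.2
      rwa [hφL] at this
  have hγcont : ContinuousOn γ (Icc 0 L) := fun t ht =>
    ((hderiv t ht).continuousWithinAt)
  have hanti : AntitoneOn γ (Icc 0 s) := by
    have hsub : Icc (0:ℝ) s ⊆ Icc 0 L := Icc_subset_Icc le_rfl hs.2
    apply antitoneOn_of_hasDerivWithinAt_nonpos (f' := fun t => Real.sin (φ t - φ s))
      (convex_Icc 0 s) (hγcont.mono hsub)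
    · intro x hx
      have hx' : x ∈ Icc 0 L := hsub (interior_subset hx)
      exact (hderiv x hx').mono (interior_subset.trans hsub)
    · intro x hx
      rw [interior_Icc] at hx
      have hx' : x ∈ Icc 0 L := hsub ⟨hx.1.le, hx.2.le⟩
      have h1 := (hφbound x hx').1
      have h2 := (hφbound s hs).2
      have hle : φ x ≤ φ s := hmono hx' hs hx.2.le
      apply Real.sin_nonpos_of_nonpos_of_neg_pi_le (by linarith)
      linarith [hΩ.2]
  have hmon : MonotoneOn γ (Icc s L) := by
    have hsub : Icc s L ⊆ Icc 0 L := Icc_subset_Icc hs.1 le_rfl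
    apply monotoneOn_of_hasDerivWithinAt_nonneg (f' := fun t => Real.sin (φ t - φ s))
      (convex_Icc s L) (hγcont.mono hsub)
    · intro x hx
      have hx' : x ∈ Icc 0 L := hsub (interior_subset hx)
      exact (hderiv x hx').mono (interior_subset.trans hsub)
    · intro x hx
      rw [interior_Icc] at hx
      have hx' : x ∈ Icc 0 L := hsub ⟨hx.1.le, hx.2.le⟩
      have h2 := (hφbound x hx').2
      have h1 := (hφbound s hs).1
      have hle : φ s ≤ φ x := hmono hs hx' hx.1.le
      apply Real.sin_nonneg_of_nonneg_of_le_pi (by linarith)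
      linarith [hΩ.2]
  have hγs : γ s = 0 := by rw [hγ]; simp
  refine ⟨hderiv, hanti, hmon, ?_⟩
  intro t ht
  rcases le_total t s with h | h
  · have := hanti ⟨ht.1, h⟩ ⟨hs.1, le_rfl⟩ h
    rwa [hγs] at this
  · have := hmon ⟨le_rfl, hs.2⟩ ⟨h, ht.2⟩ h
    rwa [hγs] at this
end

section
/- Let X : [0,L] → ℝ² be a unit-speed curve with X(0) = A, X(L) = B, and nondecreasing angle function φ with φ(0) = 0 and φ(L) = Ω ∈ (0,π). Then the length satisfies L ≤ b̃ / cos(Ω/2), where b̃ is the first coordinate of B − A in the orthonormal frame obtained by rotating the initial tangent direction X'(0) by angle Ω/2. -/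
open Set

/-- Length bound: for a unit-speed curve from `A = X 0` to `B = X L` with
nondecreasing tangent angle `φ`, `φ(0) = 0`, `φ(L) = Ω ∈ (0,π)` (in the frame where
`X'(0) = (1,0)`), one has `L ≤ b̃ / cos(Ω/2)`, where `b̃ = ⟨B − A, i⟩` and
`i = (cos(Ω/2), sin(Ω/2))` is the initial tangent rotated by `Ω/2`. -/
theorem stmt3 (L Ω : ℝ) (hL : 0 < L) (hΩ : Ω ∈ Ioo 0 Real.pi)
    (X : ℝ → ℝ × ℝ) (φ : ℝ → ℝ)
    (hφc : ContinuousOn φ (Icc 0 L))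
    (hmono : MonotoneOn φ (Icc 0 L))
    (hφ0 : φ 0 = 0) (hφL : φ L = Ω)
    (hX : ∀ s ∈ Icc 0 L,
      HasDerivWithinAt X (Real.cos (φ s), Real.sin (φ s)) (Icc 0 L) s) :
    L ≤ (((X L).1 - (X 0).1) * Real.cos (Ω / 2) +
         ((X L).2 - (X 0).2) * Real.sin (Ω / 2)) / Real.cos (Ω / 2) := by
  have hΩ0 := hΩ.1
  have hΩπ := hΩ.2
  have hcos : 0 < Real.cos (Ω / 2) := by
    apply Real.cos_pos_of_mem_Ioo
    constructor <;> [linarith [Real.pi_pos]; linarith]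
  set f : ℝ → ℝ := fun s =>
    (X s).1 * Real.cos (Ω / 2) + (X s).2 * Real.sin (Ω / 2) - s * Real.cos (Ω / 2)
    with hf
  have hmem0 : (0 : ℝ) ∈ Icc 0 L := ⟨le_refl 0, hL.le⟩
  have hmemL : L ∈ Icc (0 : ℝ) L := ⟨hL.le, le_refl L⟩
  -- f is monotone on Icc 0 L
  have hfmono : MonotoneOn f (Icc 0 L) := by
    apply monotoneOn_of_hasDerivWithinAt_nonneg (convex_Icc 0 L)
      (f' := fun s => Real.cos (φ s - Ω / 2) - Real.cos (Ω / 2))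
    · have hXc : ContinuousOn X (Icc 0 L) := fun s hs => (hX s hs).continuousWithinAt
      exact ((hXc.fst.mul continuousOn_const).add (hXc.snd.mul continuousOn_const)).sub
        (continuousOn_id.mul continuousOn_const)
    · intro s hs
      have hs' : s ∈ Icc 0 L := interior_subset hs
      have := (hX s hs')
      have h1 : HasDerivWithinAt (fun u => (X u).1) (Real.cos (φ s)) (Icc 0 L) s :=
        this.fst
      have h2 : HasDerivWithinAt (fun u => (X u).2) (Real.sin (φ s)) (Icc 0 L) s :=
        this.snd
      have := (((h1.mul_const (Real.cos (Ω/2))).add (h2.mul_const (Real.sin (Ω/2)))).sub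
        ((hasDerivWithinAt_id s (Icc 0 L)).mul_const (Real.cos (Ω/2))))
      have heq : Real.cos (φ s) * Real.cos (Ω/2) + Real.sin (φ s) * Real.sin (Ω/2)
          - 1 * Real.cos (Ω/2) = Real.cos (φ s - Ω/2) - Real.cos (Ω/2) := by
        rw [Real.cos_sub]; ring
      exact (heq ▸ this).mono interior_subset
    · intro s hs
      have hs' : s ∈ Icc 0 L := interior_subset hs
      have hφlo : 0 ≤ φ s := by
        have := hmono hmem0 hs' hs'.1
        linarith [hφ0 ▸ this]
      have hφhi : φ s ≤ Ω := by
        have := hmono hs' hmemL hs'.2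
        linarith [hφL ▸ this]
      have habs : |φ s - Ω / 2| ≤ Ω / 2 := by
        rw [abs_le]; constructor <;> linarith
      have : Real.cos (Ω / 2) ≤ Real.cos |φ s - Ω / 2| := by
        apply Real.cos_le_cos_of_nonneg_of_le_pi (abs_nonneg _) (by linarith) habs
      rw [Real.cos_abs] at this
      linarith
  have key := hfmono hmem0 hmemL hL.le
  simp only [hf] at key
  rw [le_div_iff₀ hcos]
  nlinarith [key]
end

section
/- Let O, A, B be pairwise distinct points of the plane with OA ≠ OB, α = (O−A)/OA, β = (B−O)/OB, and oriented angle Ω = (α, β) ∈ (0,π). Then there exists a unique curve in the class 𝓔 (C¹, W^{2,∞}, unit-speed from A to B with initial tangent α, final tangent β, and nondecreasing tangent angle) that consists of exactly one circular arc of some radius R_a > 0 with arc length in (0, R_a π) together with one line segment of positive length. The radius R_a depends only on O, A, B, and the maximum curvature of this curve equals 1/R_a. -/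
open Set

structure CurveE (A B α : ℂ) (Ω : ℝ) where
  L : ℝ
  X : ℝ → ℂ
  φ : ℝ → ℝ
  hL : 0 < L
  hX0 : X 0 = A
  hXL : X L = B
  hφ0 : φ 0 = 0
  hφL : φ L = Ω
  hmono : MonotoneOn φ (Icc 0 L)
  hcont : ContinuousOn φ (Icc 0 L)
  hderiv : ∀ s ∈ Icc 0 L,
    HasDerivWithinAt X (α * Complex.exp ((φ s : ℂ) * Complex.I)) (Icc 0 L) s
  hW2 : ∃ K : ℝ, ∀ s ∈ Icc 0 L, ∀ t ∈ Icc 0 L, |φ s - φ t| ≤ K * |s - t|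

/-- `c` consists of exactly one line segment of positive length and one circular arc
of radius `R` (tangent angle piecewise: constant on the segment, affine with slope
`1/R` on the arc), in either order. -/
def IsSegArc {A B α : ℂ} {Ω : ℝ} (c : CurveE A B α Ω) (R : ℝ) : Prop :=
  0 < R ∧ ∃ m : ℝ, 0 < m ∧ m < c.L ∧
    (((∀ s ∈ Icc 0 m, c.φ s = 0) ∧ (∀ s ∈ Icc m c.L, c.φ s = (s - m) / R)) ∨
     ((∀ s ∈ Icc 0 m, c.φ s = s / R) ∧ (∀ s ∈ Icc m c.L, c.φ s = m / R)))


section Helpers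
open Complex


noncomputable def phiA (m R s : ℝ) : ℝ := max 0 ((s - m)/R)
noncomputable def FA (A α : ℂ) (m R s : ℝ) : ℂ :=
  A + α * (((min s m : ℝ) : ℂ) + (R:ℂ)/Complex.I * (Complex.exp ((phiA m R s : ℂ) * Complex.I) - 1))
noncomputable def phiB (m R s : ℝ) : ℝ := (min s m)/R
noncomputable def FB (A α : ℂ) (m R s : ℝ) : ℂ :=
  A + α * ((R:ℂ)/Complex.I * (Complex.exp ((phiB m R s : ℂ) * Complex.I) - 1)
      + ((max (s - m) 0 : ℝ) : ℂ) * Complex.exp (((m/R : ℝ) : ℂ) * Complex.I))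

lemma phiA_of_le (m R s : ℝ) (hR : 0 < R) (h : s ≤ m) : phiA m R s = 0 :=
  max_eq_left (div_nonpos_of_nonpos_of_nonneg (by linarith) hR.le)

lemma phiA_of_ge (m R s : ℝ) (hR : 0 < R) (h : m ≤ s) : phiA m R s = (s - m)/R :=
  max_eq_right (div_nonneg (by linarith) hR.le)

lemma phiB_of_le (m R s : ℝ) (h : s ≤ m) : phiB m R s = s/R := by
  rw [phiB, min_eq_left h]

lemma phiB_of_ge (m R s : ℝ) (h : m ≤ s) : phiB m R s = m/R := by
  rw [phiB, min_eq_right h]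

lemma FA_zero (A α : ℂ) (m R : ℝ) (hm : 0 ≤ m) (hR : 0 < R) : FA A α m R 0 = A := by
  rw [FA, phiA_of_le m R 0 hR hm, min_eq_left hm]
  simp

lemma FB_zero (A α : ℂ) (m R : ℝ) (hm : 0 ≤ m) (hR : 0 < R) : FB A α m R 0 = A := by
  rw [FB, phiB_of_le m R 0 hm, max_eq_right (by linarith)]
  simp

lemma phiA_lip (m R : ℝ) (hR : 0 < R) (s t : ℝ) :
    |phiA m R s - phiA m R t| ≤ (1/R) * |s - t| := by
  rw [phiA, phiA, max_comm 0 ((s-m)/R), max_comm 0 ((t-m)/R)]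
  calc |max ((s-m)/R) 0 - max ((t-m)/R) 0| ≤ |(s-m)/R - (t-m)/R| :=
        abs_max_sub_max_le_abs _ _ _
    _ = (1/R) * |s - t| := by
        rw [div_sub_div_same, show s - m - (t - m) = s - t by ring, abs_div,
          abs_of_pos hR]; ring

lemma phiB_lip (m R : ℝ) (hR : 0 < R) (s t : ℝ) :
    |phiB m R s - phiB m R t| ≤ (1/R) * |s - t| := by
  rw [phiB, phiB, div_sub_div_same, abs_div, abs_of_pos hR]
  have h := abs_min_sub_min_le_max s m t m
  rw [sub_self, abs_zero, max_eq_left (abs_nonneg _)] at h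
  calc |min s m - min t m| / R ≤ |s - t| / R := by gcongr
    _ = (1/R) * |s - t| := by ring

lemma cexp_arc_deriv (R m s : ℝ) :
    HasDerivAt (fun s : ℝ => Complex.exp ((((s - m)/R : ℝ) : ℂ) * Complex.I))
      (Complex.exp ((((s - m)/R : ℝ) : ℂ) * Complex.I) * (Complex.I / R)) s := by
  have h1 : HasDerivAt (fun s : ℝ => (s - m)/R) (1/R) s := by
    simpa using ((hasDerivAt_id s).sub_const m).div_const R
  have h2 := (h1.ofReal_comp.mul_const Complex.I).cexp
  convert h2 using 1
  push_cast; ring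

lemma FA_deriv (A α : ℂ) (m R L : ℝ) (h0m : 0 ≤ m) (hR : 0 < R) (hmL : m ≤ L) :
    ∀ s ∈ Icc (0:ℝ) L, HasDerivWithinAt (FA A α m R)
      (α * Complex.exp ((phiA m R s : ℂ) * Complex.I)) (Icc (0:ℝ) L) s := by
  intro s _
  have hunion : Icc (0:ℝ) L = Icc 0 m ∪ Icc m L := (Icc_union_Icc_eq_Icc h0m hmL).symm
  rw [hunion]
  have claim1 : HasDerivWithinAt (FA A α m R)
      (α * Complex.exp ((phiA m R s : ℂ) * Complex.I)) (Icc (0:ℝ) m) s := by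
    by_cases hs : s ∈ Icc (0:ℝ) m
    · have hphi : ∀ t ∈ Icc (0:ℝ) m, phiA m R t = 0 := by
        intro t ht
        have : (t - m)/R ≤ 0 := div_nonpos_of_nonpos_of_nonneg (by linarith [ht.2]) hR.le
        simp [phiA, max_eq_left this]
      have heq : ∀ t ∈ Icc (0:ℝ) m, FA A α m R t = A + α * (t : ℂ) := by
        intro t ht
        simp [FA, hphi t ht, min_eq_left ht.2]
      have hg : HasDerivAt (fun t : ℝ => A + α * (t : ℂ)) α s := by
        simpa using ((hasDerivAt_id s).ofReal_comp.const_mul α).const_add A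
      have := (hg.hasDerivWithinAt (s := Icc (0:ℝ) m)).congr (fun t ht => heq t ht) (heq s hs)
      simpa [hphi s hs] using this
    · exact HasFDerivWithinAt.of_notMem_closure (by rwa [closure_Icc])
  have claim2 : HasDerivWithinAt (FA A α m R)
      (α * Complex.exp ((phiA m R s : ℂ) * Complex.I)) (Icc m L) s := by
    by_cases hs : s ∈ Icc m L
    · have hphi : ∀ t ∈ Icc m L, phiA m R t = (t - m)/R := by
        intro t ht
        have : 0 ≤ (t - m)/R := div_nonneg (by linarith [ht.1]) hR.le
        simp [phiA, max_eq_right this]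
      have heq : ∀ t ∈ Icc m L, FA A α m R t =
          A + α * ((m : ℂ) + (R:ℂ)/Complex.I * (Complex.exp ((((t - m)/R : ℝ) : ℂ) * Complex.I) - 1)) := by
        intro t ht
        simp [FA, hphi t ht, min_eq_right ht.1]
      have hg : HasDerivAt (fun t : ℝ => A + α * ((m : ℂ) + (R:ℂ)/Complex.I *
          (Complex.exp ((((t - m)/R : ℝ) : ℂ) * Complex.I) - 1)))
          (α * ((R:ℂ)/Complex.I * (Complex.exp ((((s - m)/R : ℝ) : ℂ) * Complex.I) * (Complex.I / R)))) s := by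
        exact (((((cexp_arc_deriv R m s).sub_const 1).const_mul ((R:ℂ)/Complex.I)).const_add (m:ℂ)).const_mul α).const_add A
      have := (hg.hasDerivWithinAt (s := Icc m L)).congr (fun t ht => heq t ht) (heq s hs)
      have hval : α * ((R:ℂ)/Complex.I * (Complex.exp ((((s - m)/R : ℝ) : ℂ) * Complex.I) * (Complex.I / R)))
          = α * Complex.exp ((phiA m R s : ℂ) * Complex.I) := by
        rw [hphi s hs]
        have hR' : (R:ℂ) ≠ 0 := Complex.ofReal_ne_zero.mpr hR.ne'
        field_simp
      rwa [hval] at this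
    · exact HasFDerivWithinAt.of_notMem_closure (by rwa [closure_Icc])
  exact claim1.union claim2

lemma cexp_arc_deriv' (R s : ℝ) :
    HasDerivAt (fun s : ℝ => Complex.exp (((s/R : ℝ) : ℂ) * Complex.I))
      (Complex.exp (((s/R : ℝ) : ℂ) * Complex.I) * (Complex.I / R)) s := by
  have h1 : HasDerivAt (fun s : ℝ => s/R) (1/R) s := by
    simpa using (hasDerivAt_id s).div_const R
  have h2 := (h1.ofReal_comp.mul_const Complex.I).cexp
  convert h2 using 1
  push_cast; ring

lemma FB_deriv (A α : ℂ) (m R L : ℝ) (h0m : 0 ≤ m) (hR : 0 < R) (hmL : m ≤ L) :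
    ∀ s ∈ Icc (0:ℝ) L, HasDerivWithinAt (FB A α m R)
      (α * Complex.exp ((phiB m R s : ℂ) * Complex.I)) (Icc (0:ℝ) L) s := by
  intro s _
  have hunion : Icc (0:ℝ) L = Icc 0 m ∪ Icc m L := (Icc_union_Icc_eq_Icc h0m hmL).symm
  rw [hunion]
  have claim1 : HasDerivWithinAt (FB A α m R)
      (α * Complex.exp ((phiB m R s : ℂ) * Complex.I)) (Icc (0:ℝ) m) s := by
    by_cases hs : s ∈ Icc (0:ℝ) m
    · have hphi : ∀ t ∈ Icc (0:ℝ) m, phiB m R t = t/R := by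
        intro t ht; simp [phiB, min_eq_left ht.2]
      have heq : ∀ t ∈ Icc (0:ℝ) m, FB A α m R t =
          A + α * ((R:ℂ)/Complex.I * (Complex.exp (((t/R : ℝ) : ℂ) * Complex.I) - 1)) := by
        intro t ht
        have : max (t - m) 0 = 0 := max_eq_right (by linarith [ht.2])
        simp [FB, hphi t ht, this]
      have hg : HasDerivAt (fun t : ℝ => A + α * ((R:ℂ)/Complex.I *
          (Complex.exp (((t/R : ℝ) : ℂ) * Complex.I) - 1)))
          (α * ((R:ℂ)/Complex.I * (Complex.exp (((s/R : ℝ) : ℂ) * Complex.I) * (Complex.I / R)))) s :=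
        ((((cexp_arc_deriv' R s).sub_const 1).const_mul ((R:ℂ)/Complex.I)).const_mul α).const_add A
      have := (hg.hasDerivWithinAt (s := Icc (0:ℝ) m)).congr (fun t ht => heq t ht) (heq s hs)
      have hval : α * ((R:ℂ)/Complex.I * (Complex.exp (((s/R : ℝ) : ℂ) * Complex.I) * (Complex.I / R)))
          = α * Complex.exp ((phiB m R s : ℂ) * Complex.I) := by
        rw [hphi s hs]
        have hR' : (R:ℂ) ≠ 0 := Complex.ofReal_ne_zero.mpr hR.ne'
        field_simp
      rwa [hval] at this
    · exact HasFDerivWithinAt.of_notMem_closure (by rwa [closure_Icc])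
  have claim2 : HasDerivWithinAt (FB A α m R)
      (α * Complex.exp ((phiB m R s : ℂ) * Complex.I)) (Icc m L) s := by
    by_cases hs : s ∈ Icc m L
    · have hphi : ∀ t ∈ Icc m L, phiB m R t = m/R := by
        intro t ht; simp [phiB, min_eq_right ht.1]
      have heq : ∀ t ∈ Icc m L, FB A α m R t =
          A + α * ((R:ℂ)/Complex.I * (Complex.exp (((m/R : ℝ) : ℂ) * Complex.I) - 1)
            + ((t : ℂ) - (m:ℂ)) * Complex.exp (((m/R : ℝ) : ℂ) * Complex.I)) := by
        intro t ht
        have : max (t - m) 0 = t - m := max_eq_left (by linarith [ht.1])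
        simp [FB, hphi t ht, this]
      have hg : HasDerivAt (fun t : ℝ => A + α * ((R:ℂ)/Complex.I *
          (Complex.exp (((m/R : ℝ) : ℂ) * Complex.I) - 1)
            + ((t : ℂ) - (m:ℂ)) * Complex.exp (((m/R : ℝ) : ℂ) * Complex.I)))
          (α * Complex.exp (((m/R : ℝ) : ℂ) * Complex.I)) s := by
      -- derivative of t ↦ (↑t - m) * c is c
        have hid : HasDerivAt (fun t : ℝ => ((t : ℂ) - (m:ℂ)) * Complex.exp (((m/R : ℝ) : ℂ) * Complex.I))
            (Complex.exp (((m/R : ℝ) : ℂ) * Complex.I)) s := by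
          simpa using (((hasDerivAt_id s).ofReal_comp.sub_const (m:ℂ)).mul_const
            (Complex.exp (((m/R : ℝ) : ℂ) * Complex.I)))
        simpa using ((hid.const_add ((R:ℂ)/Complex.I *
            (Complex.exp (((m/R : ℝ) : ℂ) * Complex.I) - 1))).const_mul α).const_add A
      have := (hg.hasDerivWithinAt (s := Icc m L)).congr (fun t ht => heq t ht) (heq s hs)
      rwa [hphi s hs]
    · exact HasFDerivWithinAt.of_notMem_closure (by rwa [closure_Icc])
  exact claim1.union claim2


lemma caseA_eq (m R a b Ω : ℝ) :
    ((m : ℂ) + (R:ℂ)/Complex.I * (Complex.exp ((Ω:ℂ)*Complex.I) - 1)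
      = (a:ℂ) + (b:ℂ)*Complex.exp ((Ω:ℂ)*Complex.I))
    ↔ (m + R*Real.sin Ω = a + b*Real.cos Ω ∧ R*(1-Real.cos Ω) = b*Real.sin Ω) := by
  rw [Complex.exp_mul_I, ← Complex.ofReal_cos, ← Complex.ofReal_sin, Complex.ext_iff]
  simp only [Complex.div_I, Complex.add_re, Complex.add_im, Complex.mul_re, Complex.mul_im,
    Complex.ofReal_re, Complex.ofReal_im, Complex.neg_re, Complex.neg_im, Complex.I_re,
    Complex.I_im, Complex.sub_re, Complex.sub_im, Complex.one_re, Complex.one_im]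
  constructor <;> rintro ⟨h1, h2⟩ <;> constructor <;> nlinarith [h1, h2]

lemma caseB_eq (t R a b Ω : ℝ) :
    ((R:ℂ)/Complex.I * (Complex.exp ((Ω:ℂ)*Complex.I) - 1) + (t:ℂ)*Complex.exp ((Ω:ℂ)*Complex.I)
      = (a:ℂ) + (b:ℂ)*Complex.exp ((Ω:ℂ)*Complex.I))
    ↔ (R*Real.sin Ω + t*Real.cos Ω = a + b*Real.cos Ω
        ∧ R*(1-Real.cos Ω) + t*Real.sin Ω = b*Real.sin Ω) := by
  rw [Complex.exp_mul_I, ← Complex.ofReal_cos, ← Complex.ofReal_sin, Complex.ext_iff]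
  simp only [Complex.div_I, Complex.add_re, Complex.add_im, Complex.mul_re, Complex.mul_im,
    Complex.ofReal_re, Complex.ofReal_im, Complex.neg_re, Complex.neg_im, Complex.I_re,
    Complex.I_im, Complex.sub_re, Complex.sub_im, Complex.one_re, Complex.one_im]
  constructor <;> rintro ⟨h1, h2⟩ <;> constructor <;> nlinarith [h1, h2]

lemma realA_solve (m R a b Ω : ℝ) (hΩ1 : 0 < Ω) (hΩ2 : Ω < Real.pi) :
    (m + R*Real.sin Ω = a + b*Real.cos Ω ∧ R*(1-Real.cos Ω) = b*Real.sin Ω)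
    ↔ (m = a - b ∧ R*Real.sin (Ω/2) = b*Real.cos (Ω/2)) := by
  have hs : Real.sin Ω = 2*Real.sin (Ω/2)*Real.cos (Ω/2) := by
    rw [show Ω = 2*(Ω/2) by ring, Real.sin_two_mul]; ring_nf
  have hc : Real.cos Ω = 1 - 2*(Real.sin (Ω/2))^2 := by
    have h := Real.cos_two_mul (Ω/2)
    rw [show 2*(Ω/2) = Ω by ring] at h
    nlinarith [Real.sin_sq_add_cos_sq (Ω/2)]
  have hpy := Real.sin_sq_add_cos_sq (Ω/2)
  have hspos : 0 < Real.sin (Ω/2) := Real.sin_pos_of_pos_of_lt_pi (by linarith) (by linarith [Real.pi_pos])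
  set s := Real.sin (Ω/2); set c := Real.cos (Ω/2)
  rw [hs, hc]
  constructor
  · rintro ⟨h1, h2⟩
    have e2 : R*s = b*c := by
      have h3 : 2*s*(R*s - b*c) = 0 := by linear_combination h2
      have := mul_eq_zero.mp h3
      rcases this with h | h
      · exact absurd h (by positivity)
      · linarith
    refine ⟨?_, e2⟩
    linear_combination h1 - 2*c*e2 - (2*b)*hpy + 2*b
  · rintro ⟨h1, h2⟩
    constructor
    · linear_combination h1 + 2*c*h2 + 2*b*hpy - 2*b
    · linear_combination 2*s*h2

lemma realB_solve (t R a b Ω : ℝ) (hΩ1 : 0 < Ω) (hΩ2 : Ω < Real.pi) :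
    (R*Real.sin Ω + t*Real.cos Ω = a + b*Real.cos Ω
        ∧ R*(1-Real.cos Ω) + t*Real.sin Ω = b*Real.sin Ω)
    ↔ (t = b - a ∧ R*Real.sin (Ω/2) = a*Real.cos (Ω/2)) := by
  have hs : Real.sin Ω = 2*Real.sin (Ω/2)*Real.cos (Ω/2) := by
    rw [show Ω = 2*(Ω/2) by ring, Real.sin_two_mul]; ring_nf
  have hc : Real.cos Ω = 1 - 2*(Real.sin (Ω/2))^2 := by
    have h := Real.cos_two_mul (Ω/2)
    rw [show 2*(Ω/2) = Ω by ring] at h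
    nlinarith [Real.sin_sq_add_cos_sq (Ω/2)]
  have hpy := Real.sin_sq_add_cos_sq (Ω/2)
  have hspos : 0 < Real.sin (Ω/2) := Real.sin_pos_of_pos_of_lt_pi (by linarith) (by linarith [Real.pi_pos])
  set s := Real.sin (Ω/2); set c := Real.cos (Ω/2)
  rw [hs, hc]
  constructor
  · rintro ⟨h1, h2⟩
    have e2 : R*s + t*c = b*c := by
      have h3 : 2*s*(R*s + t*c - b*c) = 0 := by linear_combination h2
      rcases mul_eq_zero.mp h3 with h | h
      · exact absurd h (by positivity)
      · linarith
    have ht : t = b - a := by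
      linear_combination -h1 + 2*c*e2 - (2*t - 2*b)*hpy + (2*t - 2*b)
    refine ⟨ht, ?_⟩
    linear_combination e2 - c*ht - b*c + b*c
  · rintro ⟨h1, h2⟩
    constructor
    · linear_combination 2*c*h2 + (1-2*s^2)*h1 + 2*a*hpy
    · linear_combination 2*s*h2 + 2*s*c*h1

lemma eq_of_same_deriv (L : ℝ) (X F : ℝ → ℂ) (d : ℝ → ℂ)
    (hX : ∀ s ∈ Icc (0:ℝ) L, HasDerivWithinAt X (d s) (Icc (0:ℝ) L) s)
    (hF : ∀ s ∈ Icc (0:ℝ) L, HasDerivWithinAt F (d s) (Icc (0:ℝ) L) s) :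
    ∀ s ∈ Icc (0:ℝ) L, X s - F s = X 0 - F 0 := by
  have hcont : ContinuousOn (fun s => X s - F s) (Icc 0 L) := fun s hs =>
    ((hX s hs).continuousWithinAt.sub (hF s hs).continuousWithinAt)
  have hd : ∀ x ∈ Ico (0:ℝ) L, HasDerivWithinAt (fun s => X s - F s) 0 (Ici x) x := by
    intro x hx
    have h1 := (hX x (Ico_subset_Icc_self hx)).sub (hF x (Ico_subset_Icc_self hx))
    rw [sub_self] at h1
    exact h1.mono_of_mem_nhdsWithin (Icc_mem_nhdsGE_of_mem hx)
  exact fun s hs => constant_of_has_deriv_right_zero hcont hd s hs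

lemma eqA {A B α : ℂ} {Ω : ℝ} (a b : ℝ) (hΩ1 : 0 < Ω) (hΩ2 : Ω < Real.pi)
    (hα0 : α ≠ 0) (hB : B = A + α * ((a:ℂ) + (b:ℂ)*Complex.exp ((Ω:ℂ)*Complex.I)))
    (c : CurveE A B α Ω) (R m : ℝ) (hR : 0 < R) (hm0 : 0 < m) (hmL : m < c.L)
    (hseg : ∀ s ∈ Icc 0 m, c.φ s = 0) (harc : ∀ s ∈ Icc m c.L, c.φ s = (s - m)/R) :
    m = a - b ∧ R*Real.sin (Ω/2) = b*Real.cos (Ω/2) ∧ c.L = m + R*Ω ∧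
      ∀ s ∈ Icc 0 c.L, c.X s = FA A α m R s := by
  have hphi : ∀ s ∈ Icc (0:ℝ) c.L, c.φ s = phiA m R s := by
    intro s hs
    rcases le_total s m with h | h
    · rw [hseg s ⟨hs.1, h⟩, phiA_of_le m R s hR h]
    · rw [harc s ⟨h, hs.2⟩, phiA_of_ge m R s hR h]
  have hF := FA_deriv A α m R c.L hm0.le hR hmL.le
  have hF' : ∀ s ∈ Icc (0:ℝ) c.L, HasDerivWithinAt (FA A α m R)
      (α * Complex.exp ((c.φ s : ℂ)*Complex.I)) (Icc (0:ℝ) c.L) s := fun s hs => by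
    rw [hphi s hs]; exact hF s hs
  have hXF := eq_of_same_deriv c.L c.X (FA A α m R) _ c.hderiv hF'
  have hXeq : ∀ s ∈ Icc (0:ℝ) c.L, c.X s = FA A α m R s := by
    intro s hs
    have h := hXF s hs
    rw [c.hX0, FA_zero A α m R hm0.le hR, sub_self, sub_eq_zero] at h
    exact h
  have hLmem : c.L ∈ Icc (0:ℝ) c.L := ⟨c.hL.le, le_rfl⟩
  have hΩL : (c.L - m)/R = Ω := by rw [← harc c.L ⟨hmL.le, le_rfl⟩, c.hφL]
  have hLval : c.L = m + R*Ω := by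
    have := hΩL
    field_simp at this
    linarith
  have hphiL : phiA m R c.L = Ω := by
    rw [phiA_of_ge m R c.L hR hmL.le, hΩL]
  have hFAL : FA A α m R c.L
      = A + α*((m:ℂ) + (R:ℂ)/Complex.I * (Complex.exp ((Ω:ℂ)*Complex.I) - 1)) := by
    rw [FA, min_eq_right hmL.le, hphiL]
  have hBeq : (m:ℂ) + (R:ℂ)/Complex.I*(Complex.exp ((Ω:ℂ)*Complex.I) - 1)
      = (a:ℂ) + (b:ℂ)*Complex.exp ((Ω:ℂ)*Complex.I) := by
    have h1 := hXeq c.L hLmem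
    rw [c.hXL, hFAL] at h1
    have h2 := hB.symm.trans h1
    exact (mul_left_cancel₀ hα0 (add_left_cancel h2)).symm
  obtain ⟨h1, h2⟩ := (caseA_eq m R a b Ω).mp hBeq
  obtain ⟨hma, hRs⟩ := (realA_solve m R a b Ω hΩ1 hΩ2).mp ⟨h1, h2⟩
  exact ⟨hma, hRs, hLval, hXeq⟩

lemma eqB {A B α : ℂ} {Ω : ℝ} (a b : ℝ) (hΩ1 : 0 < Ω) (hΩ2 : Ω < Real.pi)
    (hα0 : α ≠ 0) (hB : B = A + α * ((a:ℂ) + (b:ℂ)*Complex.exp ((Ω:ℂ)*Complex.I)))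
    (c : CurveE A B α Ω) (R m : ℝ) (hR : 0 < R) (hm0 : 0 < m) (hmL : m < c.L)
    (harc : ∀ s ∈ Icc 0 m, c.φ s = s/R) (hseg : ∀ s ∈ Icc m c.L, c.φ s = m/R) :
    c.L - m = b - a ∧ R*Real.sin (Ω/2) = a*Real.cos (Ω/2) ∧ m = R*Ω ∧
      ∀ s ∈ Icc 0 c.L, c.X s = FB A α m R s := by
  have hphi : ∀ s ∈ Icc (0:ℝ) c.L, c.φ s = phiB m R s := by
    intro s hs
    rcases le_total s m with h | h
    · rw [harc s ⟨hs.1, h⟩, phiB_of_le m R s h]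
    · rw [hseg s ⟨h, hs.2⟩, phiB_of_ge m R s h]
  have hF := FB_deriv A α m R c.L hm0.le hR hmL.le
  have hF' : ∀ s ∈ Icc (0:ℝ) c.L, HasDerivWithinAt (FB A α m R)
      (α * Complex.exp ((c.φ s : ℂ)*Complex.I)) (Icc (0:ℝ) c.L) s := fun s hs => by
    rw [hphi s hs]; exact hF s hs
  have hXF := eq_of_same_deriv c.L c.X (FB A α m R) _ c.hderiv hF'
  have hXeq : ∀ s ∈ Icc (0:ℝ) c.L, c.X s = FB A α m R s := by
    intro s hs
    have h := hXF s hs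
    rw [c.hX0, FB_zero A α m R hm0.le hR, sub_self, sub_eq_zero] at h
    exact h
  have hLmem : c.L ∈ Icc (0:ℝ) c.L := ⟨c.hL.le, le_rfl⟩
  have hΩL : m/R = Ω := by rw [← hseg c.L ⟨hmL.le, le_rfl⟩, c.hφL]
  have hmval : m = R*Ω := by
    have := hΩL
    field_simp at this
    linarith
  have hphiL : phiB m R c.L = Ω := by rw [phiB_of_ge m R c.L hmL.le, hΩL]
  have hFBL : FB A α m R c.L
      = A + α*((R:ℂ)/Complex.I * (Complex.exp ((Ω:ℂ)*Complex.I) - 1)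
          + ((c.L - m : ℝ):ℂ) * Complex.exp ((Ω:ℂ)*Complex.I)) := by
    rw [FB, hphiL, max_eq_left (by linarith), hΩL]
  have hBeq : (R:ℂ)/Complex.I*(Complex.exp ((Ω:ℂ)*Complex.I) - 1)
      + ((c.L - m : ℝ):ℂ)*Complex.exp ((Ω:ℂ)*Complex.I)
      = (a:ℂ) + (b:ℂ)*Complex.exp ((Ω:ℂ)*Complex.I) := by
    have h1 := hXeq c.L hLmem
    rw [c.hXL, hFBL] at h1
    have h2 := hB.symm.trans h1
    exact (mul_left_cancel₀ hα0 (add_left_cancel h2)).symm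
  obtain ⟨h1, h2⟩ := (caseB_eq (c.L - m) R a b Ω).mp hBeq
  obtain ⟨hta, hRs⟩ := (realB_solve (c.L - m) R a b Ω hΩ1 hΩ2).mp ⟨h1, h2⟩
  exact ⟨hta, hRs, hmval, hXeq⟩

lemma existsA {A B α : ℂ} {Ω : ℝ} (a b : ℝ) (hΩ1 : 0 < Ω) (hΩ2 : Ω < Real.pi)
    (hba : b < a) (hB : B = A + α * ((a:ℂ) + (b:ℂ)*Complex.exp ((Ω:ℂ)*Complex.I)))
    (R : ℝ) (hR : 0 < R) (hkey : R*Real.sin (Ω/2) = b*Real.cos (Ω/2)) :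
    ∃ c : CurveE A B α Ω, IsSegArc c R := by
  set m := a - b with hm
  have hm0 : 0 < m := by simp [hm]; linarith
  set L := m + R*Ω with hL
  have hmL : m < L := by nlinarith
  have hphiL : phiA m R L = Ω := by
    rw [phiA_of_ge m R L hR hmL.le]
    field_simp [hL]
    linarith
  refine ⟨⟨L, FA A α m R, phiA m R, by linarith, FA_zero A α m R hm0.le hR, ?_,
    phiA_of_le m R 0 hR hm0.le, hphiL,
    fun x _ y _ h => max_le_max le_rfl ((div_le_div_iff_of_pos_right hR).mpr (by linarith)),
    (continuous_const.max ((continuous_id.sub continuous_const).div_const R)).continuousOn,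
    FA_deriv A α m R L hm0.le hR hmL.le,
    ⟨1/R, fun s _ t _ => phiA_lip m R hR s t⟩⟩, hR, m, hm0, hmL,
    Or.inl ⟨fun s hs => phiA_of_le m R s hR hs.2, fun s hs => phiA_of_ge m R s hR hs.1⟩⟩
  show FA A α m R L = B
  rw [FA, min_eq_right hmL.le, hphiL]
  have hc : (m:ℂ) + (R:ℂ)/Complex.I*(Complex.exp ((Ω:ℂ)*Complex.I) - 1)
      = (a:ℂ) + (b:ℂ)*Complex.exp ((Ω:ℂ)*Complex.I) :=
    (caseA_eq m R a b Ω).mpr ((realA_solve m R a b Ω hΩ1 hΩ2).mpr ⟨hm, hkey⟩)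
  rw [hc, ← hB]

lemma existsB {A B α : ℂ} {Ω : ℝ} (a b : ℝ) (hΩ1 : 0 < Ω) (hΩ2 : Ω < Real.pi)
    (hab : a < b) (hB : B = A + α * ((a:ℂ) + (b:ℂ)*Complex.exp ((Ω:ℂ)*Complex.I)))
    (R : ℝ) (hR : 0 < R) (hkey : R*Real.sin (Ω/2) = a*Real.cos (Ω/2)) :
    ∃ c : CurveE A B α Ω, IsSegArc c R := by
  set m := R*Ω with hm
  have hm0 : 0 < m := by positivity
  set L := m + (b - a) with hL
  have hmL : m < L := by simp [hL]; linarith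
  have hmR : m / R = Ω := by field_simp [hm]; exact hm
  have hphiL : phiB m R L = Ω := by rw [phiB_of_ge m R L hmL.le, hmR]
  refine ⟨⟨L, FB A α m R, phiB m R, by linarith, FB_zero A α m R hm0.le hR, ?_,
    by simpa [phiB_of_le m R 0 hm0.le] using rfl, hphiL,
    fun x _ y _ h => (div_le_div_iff_of_pos_right hR).mpr (min_le_min h le_rfl),
    ((continuous_id.min continuous_const).div_const R).continuousOn,
    FB_deriv A α m R L hm0.le hR hmL.le,
    ⟨1/R, fun s _ t _ => phiB_lip m R hR s t⟩⟩, hR, m, hm0, hmL,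
    Or.inr ⟨fun s hs => phiB_of_le m R s hs.2, fun s hs => phiB_of_ge m R s hs.1⟩⟩
  show FB A α m R L = B
  rw [FB, hphiL, max_eq_left (by linarith), hmR]
  have hc : (R:ℂ)/Complex.I*(Complex.exp ((Ω:ℂ)*Complex.I) - 1)
      + ((L - m : ℝ):ℂ)*Complex.exp ((Ω:ℂ)*Complex.I)
      = (a:ℂ) + (b:ℂ)*Complex.exp ((Ω:ℂ)*Complex.I) :=
    (caseB_eq (L - m) R a b Ω).mpr ((realB_solve (L - m) R a b Ω hΩ1 hΩ2).mpr
      ⟨by simp [hL], hkey⟩)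
  rw [hc, ← hB]

end Helpers

/-- Nonsymmetric case (`OA ≠ OB`): there is a unique curve in 𝓔 made of one circular
arc of radius `R_a > 0` (of length in `(0, R_a π)`) and one line segment of positive
length; `R_a` depends only on `O, A, B`, and the maximal curvature of this curve is
exactly `1/R_a`. -/
theorem stmt6 (O A B : ℂ) (hOA : O ≠ A) (hOB : O ≠ B) (hAB : A ≠ B)
    (hne : ‖O - A‖ ≠ ‖B - O‖)
    (α β : ℂ)
    (hα : α = (O - A) / (‖O - A‖ : ℂ))
    (hβ : β = (B - O) / (‖B - O‖ : ℂ))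
    (Ω : ℝ) (hΩ : Ω ∈ Ioo 0 Real.pi)
    (hang : β = α * Complex.exp ((Ω : ℂ) * Complex.I)) :
    ∃ Ra : ℝ, 0 < Ra ∧
      (∃ c : CurveE A B α Ω, IsSegArc c Ra) ∧
      (∀ c : CurveE A B α Ω, ∀ R : ℝ, IsSegArc c R → R = Ra) ∧
      (∀ c c' : CurveE A B α Ω, ∀ R R' : ℝ, IsSegArc c R → IsSegArc c' R' →
        c.L = c'.L ∧ ∀ s ∈ Icc 0 c.L, c.X s = c'.X s) ∧
      (∀ c : CurveE A B α Ω, IsSegArc c Ra →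
        (∀ s ∈ Icc 0 c.L, ∀ t ∈ Icc 0 c.L, |c.φ s - c.φ t| ≤ (1 / Ra) * |s - t|) ∧
        (∀ K : ℝ, (∀ s ∈ Icc 0 c.L, ∀ t ∈ Icc 0 c.L, |c.φ s - c.φ t| ≤ K * |s - t|) →
          1 / Ra ≤ K)) := by
  obtain ⟨hΩ1, hΩ2⟩ := hΩ
  set a := ‖O - A‖ with hadef
  set b := ‖B - O‖ with hbdef
  have ha : 0 < a := norm_pos_iff.mpr (sub_ne_zero.mpr hOA)
  have hb : 0 < b := norm_pos_iff.mpr (sub_ne_zero.mpr (Ne.symm hOB))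
  have hα0 : α ≠ 0 := by
    rw [hα]
    exact div_ne_zero (sub_ne_zero.mpr hOA) (Complex.ofReal_ne_zero.mpr ha.ne')
  have hB : B = A + α * ((a:ℂ) + (b:ℂ)*Complex.exp ((Ω:ℂ)*Complex.I)) := by
    have haC : (a:ℂ) ≠ 0 := Complex.ofReal_ne_zero.mpr ha.ne'
    have hbC : (b:ℂ) ≠ 0 := Complex.ofReal_ne_zero.mpr hb.ne'
    have h1 : (a:ℂ)*α = O - A := by
      rw [hα, mul_comm, div_mul_cancel₀ _ haC]
    have h2 : (b:ℂ)*β = B - O := by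
      rw [hβ, mul_comm, div_mul_cancel₀ _ hbC]
    have h3 : B = A + ((a:ℂ)*α + (b:ℂ)*β) := by rw [h1, h2]; ring
    rw [h3, hang]; ring
  have hs2 : 0 < Real.sin (Ω/2) :=
    Real.sin_pos_of_pos_of_lt_pi (by linarith) (by linarith [Real.pi_pos])
  have hc2 : 0 < Real.cos (Ω/2) :=
    Real.cos_pos_of_mem_Ioo ⟨by linarith [Real.pi_pos], by linarith⟩
  set Ra := (min a b) * Real.cos (Ω/2) / Real.sin (Ω/2) with hRadef
  have hminpos : 0 < min a b := lt_min ha hb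
  have hRapos : 0 < Ra := by positivity
  have hkey : Ra * Real.sin (Ω/2) = (min a b) * Real.cos (Ω/2) := by
    rw [hRadef]; field_simp
  refine ⟨Ra, hRapos, ?_⟩
  rcases hne.lt_or_gt with hab | hba
  -- Case a < b : arc first (case B)
  · have hmin : min a b = a := min_eq_left hab.le
    rw [hmin] at hkey
    have resolve : ∀ (c : CurveE A B α Ω) (R : ℝ), IsSegArc c R →
        R = Ra ∧ c.L = R*Ω + (b - a) ∧
        ∀ s ∈ Icc (0:ℝ) c.L, c.X s = FB A α (R*Ω) R s := by
      rintro c R ⟨hR, m, hm0, hmL, ⟨hseg, harc⟩ | ⟨harc, hseg⟩⟩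
      · obtain ⟨hma, hRs, hLval, hXeq⟩ :=
          eqA a b hΩ1 hΩ2 hα0 hB c R m hR hm0 hmL hseg harc
        exact absurd hma (by intro h; rw [h] at hm0; linarith)
      · obtain ⟨hta, hRs, hmval, hXeq⟩ :=
          eqB a b hΩ1 hΩ2 hα0 hB c R m hR hm0 hmL harc hseg
        have hRRa : R = Ra := by
          have := hRs.trans hkey.symm
          exact mul_right_cancel₀ hs2.ne' this
        refine ⟨hRRa, by linarith, ?_⟩
        rw [← hmval]
        exact hXeq
    constructor
    · exact existsB a b hΩ1 hΩ2 hab hB Ra hRapos hkey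
    refine ⟨fun c R h => (resolve c R h).1, ?_, ?_⟩
    · intro c c' R R' h h'
      obtain ⟨hR1, hL1, hX1⟩ := resolve c R h
      obtain ⟨hR2, hL2, hX2⟩ := resolve c' R' h'
      subst hR1; subst hR2
      have hLL : c.L = c'.L := by rw [hL1, hL2]
      refine ⟨hLL, fun s hs => ?_⟩
      rw [hX1 s hs, hX2 s (by rwa [← hLL])]
    · rintro c ⟨hR, m, hm0, hmL, hcase⟩
      constructor
      · intro s hs t ht
        rcases hcase with ⟨hseg, harc⟩ | ⟨harc, hseg⟩
        · have hfs : ∀ u ∈ Icc (0:ℝ) c.L, c.φ u = phiA m Ra u := by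
            intro u hu
            rcases le_total u m with h | h
            · rw [hseg u ⟨hu.1, h⟩, phiA_of_le m Ra u hRapos h]
            · rw [harc u ⟨h, hu.2⟩, phiA_of_ge m Ra u hRapos h]
          rw [hfs s hs, hfs t ht]
          exact phiA_lip m Ra hRapos s t
        · have hfs : ∀ u ∈ Icc (0:ℝ) c.L, c.φ u = phiB m Ra u := by
            intro u hu
            rcases le_total u m with h | h
            · rw [harc u ⟨hu.1, h⟩, phiB_of_le m Ra u h]
            · rw [hseg u ⟨h, hu.2⟩, phiB_of_ge m Ra u h]
          rw [hfs s hs, hfs t ht]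
          exact phiB_lip m Ra hRapos s t
      · intro K hK
        rcases hcase with ⟨hseg, harc⟩ | ⟨harc, hseg⟩
        · have hLm : 0 < c.L - m := by linarith
          have h1 := hK m ⟨hm0.le, hmL.le⟩ c.L ⟨c.hL.le, le_rfl⟩
          rw [hseg m ⟨hm0.le, le_rfl⟩, harc c.L ⟨hmL.le, le_rfl⟩, zero_sub, abs_neg,
            abs_of_nonneg (div_nonneg hLm.le hRapos.le), abs_of_neg (by linarith : m - c.L < 0),
            neg_sub] at h1
          calc 1/Ra = ((c.L - m)/Ra)/(c.L - m) := by field_simp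
            _ ≤ (K*(c.L - m))/(c.L - m) := by gcongr
            _ = K := by field_simp
        · have h1 := hK 0 ⟨le_rfl, c.hL.le⟩ m ⟨hm0.le, hmL.le⟩
          rw [harc 0 ⟨le_rfl, hm0.le⟩, hseg m ⟨le_rfl, hmL.le⟩, zero_div, zero_sub, abs_neg,
            abs_of_nonneg (div_nonneg hm0.le hRapos.le), abs_of_neg (by linarith : (0:ℝ) - m < 0),
            neg_sub, sub_zero] at h1
          calc 1/Ra = (m/Ra)/m := by field_simp
            _ ≤ (K*m)/m := by gcongr
            _ = K := by field_simp
  -- Case b < a : segment first (case A)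
  · have hmin : min a b = b := min_eq_right hba.le
    rw [hmin] at hkey
    have resolve : ∀ (c : CurveE A B α Ω) (R : ℝ), IsSegArc c R →
        R = Ra ∧ c.L = (a - b) + R*Ω ∧
        ∀ s ∈ Icc (0:ℝ) c.L, c.X s = FA A α (a - b) R s := by
      rintro c R ⟨hR, m, hm0, hmL, ⟨hseg, harc⟩ | ⟨harc, hseg⟩⟩
      · obtain ⟨hma, hRs, hLval, hXeq⟩ :=
          eqA a b hΩ1 hΩ2 hα0 hB c R m hR hm0 hmL hseg harc
        have hRRa : R = Ra := by
          have := hRs.trans hkey.symm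
          exact mul_right_cancel₀ hs2.ne' this
        refine ⟨hRRa, by rw [hLval, hma], ?_⟩
        rw [← hma]
        exact hXeq
      · obtain ⟨hta, hRs, hmval, hXeq⟩ :=
          eqB a b hΩ1 hΩ2 hα0 hB c R m hR hm0 hmL harc hseg
        exact absurd hta (by intro h; linarith)
    constructor
    · exact existsA a b hΩ1 hΩ2 hba hB Ra hRapos hkey
    refine ⟨fun c R h => (resolve c R h).1, ?_, ?_⟩
    · intro c c' R R' h h'
      obtain ⟨hR1, hL1, hX1⟩ := resolve c R h
      obtain ⟨hR2, hL2, hX2⟩ := resolve c' R' h'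
      subst hR1; subst hR2
      have hLL : c.L = c'.L := by rw [hL1, hL2]
      refine ⟨hLL, fun s hs => ?_⟩
      rw [hX1 s hs, hX2 s (by rwa [← hLL])]
    · rintro c ⟨hR, m, hm0, hmL, hcase⟩
      constructor
      · intro s hs t ht
        rcases hcase with ⟨hseg, harc⟩ | ⟨harc, hseg⟩
        · have hfs : ∀ u ∈ Icc (0:ℝ) c.L, c.φ u = phiA m Ra u := by
            intro u hu
            rcases le_total u m with h | h
            · rw [hseg u ⟨hu.1, h⟩, phiA_of_le m Ra u hRapos h]
            · rw [harc u ⟨h, hu.2⟩, phiA_of_ge m Ra u hRapos h]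
          rw [hfs s hs, hfs t ht]
          exact phiA_lip m Ra hRapos s t
        · have hfs : ∀ u ∈ Icc (0:ℝ) c.L, c.φ u = phiB m Ra u := by
            intro u hu
            rcases le_total u m with h | h
            · rw [harc u ⟨hu.1, h⟩, phiB_of_le m Ra u h]
            · rw [hseg u ⟨h, hu.2⟩, phiB_of_ge m Ra u h]
          rw [hfs s hs, hfs t ht]
          exact phiB_lip m Ra hRapos s t
      · intro K hK
        rcases hcase with ⟨hseg, harc⟩ | ⟨harc, hseg⟩
        · have hLm : 0 < c.L - m := by linarith
          have h1 := hK m ⟨hm0.le, hmL.le⟩ c.L ⟨c.hL.le, le_rfl⟩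
          rw [hseg m ⟨hm0.le, le_rfl⟩, harc c.L ⟨hmL.le, le_rfl⟩, zero_sub, abs_neg,
            abs_of_nonneg (div_nonneg hLm.le hRapos.le), abs_of_neg (by linarith : m - c.L < 0),
            neg_sub] at h1
          calc 1/Ra = ((c.L - m)/Ra)/(c.L - m) := by field_simp
            _ ≤ (K*(c.L - m))/(c.L - m) := by gcongr
            _ = K := by field_simp
        · have h1 := hK 0 ⟨le_rfl, c.hL.le⟩ m ⟨hm0.le, hmL.le⟩
          rw [harc 0 ⟨le_rfl, hm0.le⟩, hseg m ⟨le_rfl, hmL.le⟩, zero_div, zero_sub, abs_neg,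
            abs_of_nonneg (div_nonneg hm0.le hRapos.le), abs_of_neg (by linarith : (0:ℝ) - m < 0),
            neg_sub, sub_zero] at h1
          calc 1/Ra = (m/Ra)/m := by field_simp
            _ ≤ (K*m)/m := by gcongr
            _ = K := by field_simp
end

section
/- Fix p ≥ 2, θ₀ = Ω/p ∈ (0, π/p], and b ∈ ℂ. Let 𝓔_p = { R ∈ (ℝ₊*)^p : Σ_{k=0}^{p−1} i(1 − e^{iθ₀}) e^{ikθ₀} R_k = b }. If 𝓔_p is nonempty, then the function F(R) = min_{0 ≤ k ≤ p−1} R_k attains its maximum on 𝓔_p; i.e., there exists R* ∈ 𝓔_p with F(R*) = sup_{R ∈ 𝓔_p} F(R). -/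
open Finset in
private lemma stmt10_im_pos {p : ℕ} (hp : 2 ≤ p) {Ω θ₀ : ℝ}
    (hΩ : Ω ∈ Set.Ioo 0 Real.pi) (hθ : θ₀ = Ω / p) (k : Fin p) :
    0 < (1 - Real.cos θ₀) * Real.cos ((k : ℕ) * θ₀) +
        Real.sin θ₀ * Real.sin ((k : ℕ) * θ₀) := by
  have hp0 : (0 : ℝ) < p := by positivity
  have hθ0 : 0 < θ₀ := by rw [hθ]; exact div_pos hΩ.1 hp0
  have hpθ : (p : ℝ) * θ₀ = Ω := by
    rw [hθ]; field_simp
  have key : (1 - Real.cos θ₀) * Real.cos ((k : ℕ) * θ₀) +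
      Real.sin θ₀ * Real.sin ((k : ℕ) * θ₀)
      = 2 * Real.sin (θ₀ / 2) * Real.sin (((k : ℕ) + 1 / 2) * θ₀) := by
    have h1 : Real.sin (θ₀ / 2) ^ 2 = 1 / 2 - Real.cos θ₀ / 2 := by
      have := Real.sin_sq_eq_half_sub (θ₀ / 2)
      rwa [show 2 * (θ₀ / 2) = θ₀ by ring] at this
    have h2 : Real.sin θ₀ = 2 * Real.sin (θ₀ / 2) * Real.cos (θ₀ / 2) := by
      have := Real.sin_two_mul (θ₀ / 2)
      rw [show 2 * (θ₀ / 2) = θ₀ by ring] at this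
      linarith
    have h3 : (((k : ℕ) : ℝ) + 1 / 2) * θ₀ = (k : ℕ) * θ₀ + θ₀ / 2 := by ring
    rw [h3, Real.sin_add]
    linear_combination (-2 * Real.cos (((k : ℕ) : ℝ) * θ₀)) * h1 +
      Real.sin (((k : ℕ) : ℝ) * θ₀) * h2
  rw [key]
  have hθπ : θ₀ / 2 < Real.pi := by
    have : θ₀ ≤ Ω := by
      rw [hθ]
      have : (1:ℝ) ≤ p := by exact_mod_cast Nat.one_le_of_lt hp
      calc Ω / p ≤ Ω / 1 := by
            apply div_le_div_of_nonneg_left (le_of_lt hΩ.1) one_pos this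
        _ = Ω := div_one Ω
    linarith [hΩ.2]
  have hs1 : 0 < Real.sin (θ₀ / 2) :=
    Real.sin_pos_of_pos_of_lt_pi (by linarith) hθπ
  have hk : ((k : ℕ) : ℝ) + 1 / 2 < p := by
    have : ((k : ℕ) : ℝ) < p := by exact_mod_cast k.isLt
    have : ((k : ℕ) : ℝ) + 1 ≤ p := by exact_mod_cast Nat.succ_le_of_lt k.isLt
    linarith
  have hs2 : 0 < Real.sin (((k : ℕ) + 1 / 2) * θ₀) := by
    apply Real.sin_pos_of_pos_of_lt_pi
    · positivity
    · calc (((k : ℕ) : ℝ) + 1 / 2) * θ₀ < p * θ₀ := by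
            exact mul_lt_mul_of_pos_right hk hθ0
        _ = Ω := hpθ
        _ < Real.pi := hΩ.2
  positivity

private lemma stmt10_im_eq (θ₀ : ℝ) (k : ℝ) (r : ℝ) :
    (Complex.I * (1 - Complex.exp ((θ₀ : ℂ) * Complex.I)) *
      Complex.exp ((k * θ₀ : ℝ) * Complex.I) * (r : ℂ)).im
    = ((1 - Real.cos θ₀) * Real.cos (k * θ₀) + Real.sin θ₀ * Real.sin (k * θ₀)) * r := by
  simp [Complex.exp_mul_I, Complex.ext_iff, ← Complex.ofReal_mul, ← Complex.ofReal_cos,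
    ← Complex.ofReal_sin]
  left; ring

/-- The discrete class `𝓔_p` of `p`-tuples of positive radii whose `p` arcs of common
central angle `θ₀ = Ω/p` join `0` to `b`: if nonempty, the function
`F(R) = min_k R_k` attains its maximum on `𝓔_p`. -/
theorem stmt10 (p : ℕ) (hp : 2 ≤ p) (Ω : ℝ) (hΩ : Ω ∈ Set.Ioo 0 Real.pi)
    (θ₀ : ℝ) (hθ : θ₀ = Ω / p) (b : ℂ)
    (S : Set (Fin p → ℝ))
    (hS : S = {R | (∀ k, 0 < R k) ∧
      ∑ k : Fin p,
        Complex.I * (1 - Complex.exp ((θ₀ : ℂ) * Complex.I)) *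
          Complex.exp ((((k : ℕ) : ℝ) * θ₀ : ℝ) * Complex.I) * (R k : ℂ) = b})
    (hne : S.Nonempty) :
    ∃ Rstar ∈ S, ∀ R ∈ S, (⨅ k, R k) ≤ ⨅ k, Rstar k := by
  haveI : Nonempty (Fin p) := ⟨⟨0, by omega⟩⟩
  set c : Fin p → ℝ := fun k =>
    (1 - Real.cos θ₀) * Real.cos ((k : ℕ) * θ₀) + Real.sin θ₀ * Real.sin ((k : ℕ) * θ₀)
    with hc
  have hcpos : ∀ k, 0 < c k := fun k => stmt10_im_pos hp hΩ hθ k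
  -- the constraint map
  set G : (Fin p → ℝ) → ℂ := fun R => ∑ k : Fin p,
        Complex.I * (1 - Complex.exp ((θ₀ : ℂ) * Complex.I)) *
          Complex.exp ((((k : ℕ) : ℝ) * θ₀ : ℝ) * Complex.I) * (R k : ℂ) with hG
  have hGcont : Continuous G := by
    apply continuous_finset_sum
    intro k _
    exact continuous_const.mul (Complex.continuous_ofReal.comp (continuous_apply k))
  -- imaginary part of constraint
  have hGim : ∀ R : Fin p → ℝ, (G R).im = ∑ k : Fin p, c k * R k := by
    intro R
    rw [hG, Complex.im_sum]
    exact Finset.sum_congr rfl fun k _ => stmt10_im_eq θ₀ ((k : ℕ) : ℝ) (R k)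
  -- closure set T
    -- T : nonneg coords + constraint
  set T : Set (Fin p → ℝ) := {R | (∀ k, 0 ≤ R k) ∧ G R = b} with hT
  have hST : S ⊆ T := by
    rw [hS, hT]
    rintro R ⟨h1, h2⟩
    exact ⟨fun k => (h1 k).le, h2⟩
  -- T is bounded: each coordinate ≤ b.im / c k
  have hbound : ∀ R ∈ T, ∀ j, R j ≤ b.im / c j := by
    rintro R ⟨h1, h2⟩ j
    have him : ∑ k : Fin p, c k * R k = b.im := by rw [← hGim, h2]
    have hterm : c j * R j ≤ b.im := by
      rw [← him]
      exact Finset.single_le_sum (f := fun k => c k * R k)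
        (fun k _ => mul_nonneg (hcpos k).le (h1 k)) (Finset.mem_univ j)
    rw [le_div_iff₀ (hcpos j)]
    linarith [hterm]
  -- T is compact
  have hTclosed : IsClosed T := by
    have : T = (⋂ k, {R : Fin p → ℝ | 0 ≤ R k}) ∩ {R | G R = b} := by
      ext R; simp [hT, Set.mem_iInter]
    rw [this]
    exact (isClosed_iInter fun k =>
      isClosed_le continuous_const (continuous_apply k)).inter
      (isClosed_eq hGcont continuous_const)
  have hTsub : T ⊆ Set.pi Set.univ fun k => Set.Icc 0 (b.im / c k) := by
    intro R hR
    intro k _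
    exact ⟨hR.1 k, hbound R hR k⟩
  have hTcomp : IsCompact T :=
    ((isCompact_univ_pi fun k => isCompact_Icc).of_isClosed_subset hTclosed hTsub)
  -- F is continuous
  have hFcont : Continuous fun R : Fin p → ℝ => ⨅ k, R k := by
    have : (fun R : Fin p → ℝ => ⨅ k, R k)
        = fun R => Finset.univ.inf' Finset.univ_nonempty (fun k => R k) := by
      funext R
      rw [Finset.inf'_univ_eq_ciInf]
    rw [this]
    exact Continuous.finset_inf'_apply Finset.univ_nonempty
      (fun k _ => continuous_apply k)
  have hTne : T.Nonempty := hne.mono hST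
  obtain ⟨Rstar, hRstarT, hmax⟩ :=
    hTcomp.exists_isMaxOn hTne hFcont.continuousOn
  -- F Rstar > 0
  obtain ⟨R₀, hR₀⟩ := hne
  have hR₀pos : ∀ k, 0 < R₀ k := by rw [hS] at hR₀; exact hR₀.1
  have hFR₀ : 0 < ⨅ k, R₀ k := by
    rw [← Finset.inf'_univ_eq_ciInf]
    rw [Finset.lt_inf'_iff]
    exact fun k _ => hR₀pos k
  have hFstar : 0 < ⨅ k, Rstar k := lt_of_lt_of_le hFR₀ (hmax (hST hR₀))
  have hRstarpos : ∀ k, 0 < Rstar k := fun k =>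
    lt_of_lt_of_le hFstar (ciInf_le (Set.Finite.bddBelow (Set.finite_range _)) k)
  refine ⟨Rstar, ?_, fun R hR => hmax (hST hR)⟩
  rw [hS]
  exact ⟨hRstarpos, hRstarT.2⟩
end

section
/- Let X : [0,L] → ℝ² be a unit-speed curve in the class 𝓔 (from A to B with initial tangent α = (O−A)/OA toward a point O, final tangent β = (B−O)/OB, nondecreasing tangent angle φ with φ(0)=0, φ(L)=Ω ∈ (0,π)). For s with φ(s) ∈ (0,π), let Q(s) be the intersection of the line through A directed by α with the tangent line to X at X(s), and write AQ(s) = u(s)α, Q(s)X(s) = v(s)X'(s). Then u(s) = x(s) − y(s) cos φ(s)/sin φ(s) and v(s) = y(s)/sin φ(s) (coordinates in the frame (A, α, k)), u is nondecreasing where defined, u ≥ 0, and at s = L one has u(L) > 0 and v(L) > 0. In particular O ≠ A, O ≠ B, and −AO→ = u₀ α, OB→ = v₀ β with u₀, v₀ > 0. -/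
open Set MeasureTheory intervalIntegral

/-- Lemma A: in the frame `(A, α, k)` (so `A = (0,0)`, `α = (1,0)`,
`x' = cos φ`, `y' = sin φ`), for a curve of 𝓔 the abscissa `u(s)` of the
intersection `Q(s)` of the tangent line at `X(s)` with the line `(A, α)`, and the
parameter `v(s)` with `Q(s)X(s) = v(s)X'(s)`, are given by
`u = x − y cos φ / sin φ`, `v = y / sin φ`; `u` is nondecreasing where defined,
nonnegative, and `u(L) > 0`, `v(L) > 0`. Hence the point `O = Q(L) = (u(L), 0)`
(intersection of the two endpoint tangent lines) is distinct from `A` and `B`, with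
`AO = u(L)·α` and `OB = v(L)·(cos Ω, sin Ω)`, `u(L), v(L) > 0`. -/
theorem stmt12 (L Ω : ℝ) (hL : 0 < L) (hΩ : Ω ∈ Ioo 0 Real.pi)
    (φ x y : ℝ → ℝ)
    (hφc : ContinuousOn φ (Icc 0 L))
    (hmono : MonotoneOn φ (Icc 0 L))
    (hφ0 : φ 0 = 0) (hφL : φ L = Ω)
    (hx : x = fun s => ∫ u in (0:ℝ)..s, Real.cos (φ u))
    (hy : y = fun s => ∫ u in (0:ℝ)..s, Real.sin (φ u))
    (u v : ℝ → ℝ)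
    (hu : u = fun s => x s - y s * Real.cos (φ s) / Real.sin (φ s))
    (hv : v = fun s => y s / Real.sin (φ s)) :
    MonotoneOn u {s | s ∈ Icc 0 L ∧ 0 < φ s} ∧
    (∀ s ∈ Icc 0 L, 0 < φ s → 0 ≤ u s) ∧
    0 < u L ∧ 0 < v L ∧
    ((u L, (0:ℝ)) ≠ ((0:ℝ), (0:ℝ))) ∧
    ((u L, (0:ℝ)) ≠ (x L, y L)) ∧
    (x L, y L) - (u L, (0:ℝ)) = v L • (Real.cos Ω, Real.sin Ω) := by
  obtain ⟨hΩ0, hΩπ⟩ := hΩ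
  have hLmem : L ∈ Icc (0:ℝ) L := right_mem_Icc.2 hL.le
  have h0mem : (0:ℝ) ∈ Icc (0:ℝ) L := left_mem_Icc.2 hL.le
  have hφ_mem : ∀ s ∈ Icc (0:ℝ) L, φ s ∈ Icc (0:ℝ) Ω := fun s hs =>
    ⟨hφ0 ▸ hmono h0mem hs hs.1, hφL ▸ hmono hs hLmem hs.2⟩
  have hφlt : ∀ s ∈ Icc (0:ℝ) L, φ s < Real.pi := fun s hs =>
    lt_of_le_of_lt (hφ_mem s hs).2 hΩπ
  have hsin_nonneg : ∀ s ∈ Icc (0:ℝ) L, 0 ≤ Real.sin (φ s) := fun s hs =>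
    Real.sin_nonneg_of_nonneg_of_le_pi (hφ_mem s hs).1 (hφlt s hs).le
  have hsin_pos : ∀ s ∈ Icc (0:ℝ) L, 0 < φ s → 0 < Real.sin (φ s) := fun s hs h =>
    Real.sin_pos_of_pos_of_lt_pi h (hφlt s hs)
  -- integrability
  have hcosc : ContinuousOn (fun t => Real.cos (φ t)) (Icc 0 L) :=
    Real.continuous_cos.comp_continuousOn hφc
  have hsinc : ContinuousOn (fun t => Real.sin (φ t)) (Icc 0 L) :=
    Real.continuous_sin.comp_continuousOn hφc
  have hint : ∀ g : ℝ → ℝ, ContinuousOn g (Icc 0 L) → ∀ a b, a ∈ Icc (0:ℝ) L →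
      b ∈ Icc (0:ℝ) L → IntervalIntegrable g volume a b := by
    intro g hg a b ha hb
    exact (hg.mono (uIcc_subset_Icc ha hb)).intervalIntegrable
  -- x b - x a and y b - y a as integrals
  have hxsub : ∀ a b, a ∈ Icc (0:ℝ) L → b ∈ Icc (0:ℝ) L →
      x b - x a = ∫ t in a..b, Real.cos (φ t) := by
    intro a b ha hb
    rw [hx]
    exact integral_interval_sub_left (hint _ hcosc 0 b h0mem hb) (hint _ hcosc 0 a h0mem ha)
  have hysub : ∀ a b, a ∈ Icc (0:ℝ) L → b ∈ Icc (0:ℝ) L →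
      y b - y a = ∫ t in a..b, Real.sin (φ t) := by
    intro a b ha hb
    rw [hy]
    exact integral_interval_sub_left (hint _ hsinc 0 b h0mem hb) (hint _ hsinc 0 a h0mem ha)
  -- y is nonnegative
  have hy_nonneg : ∀ s ∈ Icc (0:ℝ) L, 0 ≤ y s := by
    intro s hs
    rw [hy]
    refine intervalIntegral.integral_nonneg hs.1 (fun t ht => ?_)
    exact hsin_nonneg t ⟨ht.1, ht.2.trans hs.2⟩
  -- key integral inequality
  have hkey : ∀ a b, a ∈ Icc (0:ℝ) L → b ∈ Icc (0:ℝ) L → a ≤ b →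
      0 ≤ (∫ t in a..b, Real.cos (φ t)) * Real.sin (φ b)
          - (∫ t in a..b, Real.sin (φ t)) * Real.cos (φ b) := by
    intro a b ha hb hab
    rw [← intervalIntegral.integral_mul_const, ← intervalIntegral.integral_mul_const,
      ← intervalIntegral.integral_sub ((hint _ hcosc a b ha hb).mul_const _)
        ((hint _ hsinc a b ha hb).mul_const _)]
    refine intervalIntegral.integral_nonneg hab (fun t ht => ?_)
    have htm : t ∈ Icc (0:ℝ) L := ⟨ha.1.trans ht.1, ht.2.trans hb.2⟩
    have h1 : Real.cos (φ t) * Real.sin (φ b) - Real.sin (φ t) * Real.cos (φ b)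
        = Real.sin (φ b - φ t) := by rw [Real.sin_sub]; ring
    rw [h1]
    refine Real.sin_nonneg_of_nonneg_of_le_pi ?_ ?_
    · have := hmono htm hb (ht.2); linarith
    · have := (hφ_mem t htm).1; have := hφlt b hb; linarith
  -- u s rewritten
  have hu_eq : ∀ s, Real.sin (φ s) ≠ 0 →
      u s = (x s * Real.sin (φ s) - y s * Real.cos (φ s)) / Real.sin (φ s) := by
    intro s h
    rw [hu]
    field_simp
  -- numerator of u is nonneg on [0,L]
  have hnum : ∀ s ∈ Icc (0:ℝ) L, 0 ≤ x s * Real.sin (φ s) - y s * Real.cos (φ s) := by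
    intro s hs
    have h1 := hkey 0 s h0mem hs hs.1
    have h2 := hxsub 0 s h0mem hs
    have h3 := hysub 0 s h0mem hs
    have hx0 : x 0 = 0 := by simp [hx]
    have hy0 : y 0 = 0 := by simp [hy]
    rw [← h2, ← h3, hx0, hy0] at h1
    linarith
  -- monotonicity
  have hmonoU : MonotoneOn u {s | s ∈ Icc 0 L ∧ 0 < φ s} := by
    rintro s₁ ⟨hs₁, hφ1⟩ s₂ ⟨hs₂, hφ2⟩ h12
    have S1 := hsin_pos s₁ hs₁ hφ1
    have S2 := hsin_pos s₂ hs₂ hφ2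
    rw [hu_eq s₁ S1.ne', hu_eq s₂ S2.ne', div_le_div_iff₀ S1 S2]
    have h1 := hkey s₁ s₂ hs₁ hs₂ h12
    have h2 := hxsub s₁ s₂ hs₁ hs₂
    have h3 := hysub s₁ s₂ hs₁ hs₂
    rw [← h2, ← h3] at h1
    have hy1 := hy_nonneg s₁ hs₁
    have hsin12 : 0 ≤ Real.cos (φ s₁) * Real.sin (φ s₂) - Real.sin (φ s₁) * Real.cos (φ s₂) := by
      have h4 : Real.cos (φ s₁) * Real.sin (φ s₂) - Real.sin (φ s₁) * Real.cos (φ s₂)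
          = Real.sin (φ s₂ - φ s₁) := by rw [Real.sin_sub]; ring
      rw [h4]
      refine Real.sin_nonneg_of_nonneg_of_le_pi ?_ ?_
      · have := hmono hs₁ hs₂ h12; linarith
      · have := (hφ_mem s₁ hs₁).1; have := hφlt s₂ hs₂; linarith
    nlinarith [mul_nonneg S1.le h1, mul_nonneg hy1 hsin12]
  have hsinΩ : 0 < Real.sin Ω := Real.sin_pos_of_pos_of_lt_pi hΩ0 hΩπ
  -- u L > 0
  have huL : 0 < u L := by
    -- choose δ with φ < Ω/2 on [0, δ']
    have hc0 : ContinuousWithinAt φ (Icc 0 L) 0 := hφc 0 h0mem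
    rw [Metric.continuousWithinAt_iff] at hc0
    obtain ⟨δ, hδ0, hδ⟩ := hc0 (Ω/2) (by linarith)
    set c := min (δ/2) L with hc
    have hc0' : 0 < c := lt_min (by linarith) hL
    have hcL : c ≤ L := min_le_right _ _
    have hcmem : c ∈ Icc (0:ℝ) L := ⟨hc0'.le, hcL⟩
    have hsmall : ∀ t ∈ Icc (0:ℝ) c, φ t < Ω/2 := by
      intro t ht
      have htm : t ∈ Icc (0:ℝ) L := ⟨ht.1, ht.2.trans hcL⟩
      have : dist t 0 < δ := by
        rw [Real.dist_eq, sub_zero, abs_of_nonneg ht.1]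
        exact lt_of_le_of_lt (ht.2.trans (min_le_left _ _)) (by linarith)
      have := hδ htm this
      rw [Real.dist_eq, hφ0, sub_zero] at this
      calc φ t ≤ |φ t| := le_abs_self _
        _ < Ω/2 := this
    -- numerator at L positive
    have hN : 0 < x L * Real.sin Ω - y L * Real.cos Ω := by
      have hsplit1 : (∫ t in (0:ℝ)..c, Real.cos (φ t)) + ∫ t in c..L, Real.cos (φ t)
          = ∫ t in (0:ℝ)..L, Real.cos (φ t) :=
        integral_add_adjacent_intervals (hint _ hcosc 0 c h0mem hcmem)
          (hint _ hcosc c L hcmem hLmem)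
      have hsplit2 : (∫ t in (0:ℝ)..c, Real.sin (φ t)) + ∫ t in c..L, Real.sin (φ t)
          = ∫ t in (0:ℝ)..L, Real.sin (φ t) :=
        integral_add_adjacent_intervals (hint _ hsinc 0 c h0mem hcmem)
          (hint _ hsinc c L hcmem hLmem)
      have hxL : x L = (∫ t in (0:ℝ)..c, Real.cos (φ t)) + ∫ t in c..L, Real.cos (φ t) := by
        rw [hx, hsplit1]
      have hyL : y L = (∫ t in (0:ℝ)..c, Real.sin (φ t)) + ∫ t in c..L, Real.sin (φ t) := by
        rw [hy, hsplit2]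
      have hpart2 : 0 ≤ (∫ t in c..L, Real.cos (φ t)) * Real.sin Ω
          - (∫ t in c..L, Real.sin (φ t)) * Real.cos Ω := by
        have := hkey c L hcmem hLmem hcL
        rwa [hφL] at this
      have hpart1 : 0 < (∫ t in (0:ℝ)..c, Real.cos (φ t)) * Real.sin Ω
          - (∫ t in (0:ℝ)..c, Real.sin (φ t)) * Real.cos Ω := by
        rw [← intervalIntegral.integral_mul_const, ← intervalIntegral.integral_mul_const,
          ← intervalIntegral.integral_sub ((hint _ hcosc 0 c h0mem hcmem).mul_const _)
            ((hint _ hsinc 0 c h0mem hcmem).mul_const _)]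
        refine intervalIntegral_pos_of_pos_on
          (((hint _ hcosc 0 c h0mem hcmem).mul_const _).sub
            ((hint _ hsinc 0 c h0mem hcmem).mul_const _)) (fun t ht => ?_) hc0'
        have htc : t ∈ Icc (0:ℝ) c := ⟨ht.1.le, ht.2.le⟩
        have h1 : Real.cos (φ t) * Real.sin Ω - Real.sin (φ t) * Real.cos Ω
            = Real.sin (Ω - φ t) := by rw [Real.sin_sub]; ring
        rw [h1]
        refine Real.sin_pos_of_pos_of_lt_pi ?_ ?_
        · have := hsmall t htc; linarith
        · have := (hφ_mem t ⟨htc.1, htc.2.trans hcL⟩).1; linarith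
      rw [hxL, hyL]; nlinarith
    have : u L = (x L * Real.sin Ω - y L * Real.cos Ω) / Real.sin Ω := by
      rw [hu_eq L (by rw [hφL]; exact hsinΩ.ne'), hφL]
    rw [this]
    exact div_pos hN hsinΩ
  -- y L > 0
  have hyL_pos : 0 < y L := by
    have hcL' : ContinuousWithinAt φ (Icc 0 L) L := hφc L hLmem
    rw [Metric.continuousWithinAt_iff] at hcL'
    obtain ⟨δ, hδ0, hδ⟩ := hcL' (Ω/2) (by linarith)
    set c := max (L - δ/2) 0 with hc
    have hcltL : c < L := by
      rcases max_cases (L - δ/2) 0 with ⟨h1, _⟩ | ⟨h1, _⟩ <;> rw [hc, h1] <;> linarith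
    have hc0 : 0 ≤ c := le_max_right _ _
    have hcmem : c ∈ Icc (0:ℝ) L := ⟨hc0, hcltL.le⟩
    have hbig : ∀ t ∈ Icc c L, Ω/2 < φ t := by
      intro t ht
      have htm : t ∈ Icc (0:ℝ) L := ⟨hc0.trans ht.1, ht.2⟩
      have : dist t L < δ := by
        rw [Real.dist_eq, abs_of_nonpos (by linarith [ht.2])]
        have : L - δ/2 ≤ c := le_max_left _ _
        linarith [ht.1]
      have := hδ htm this
      rw [Real.dist_eq, hφL] at this
      have := abs_lt.1 this
      linarith [this.1]
    have hsplit : (∫ t in (0:ℝ)..c, Real.sin (φ t)) + ∫ t in c..L, Real.sin (φ t)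
        = ∫ t in (0:ℝ)..L, Real.sin (φ t) :=
      integral_add_adjacent_intervals (hint _ hsinc 0 c h0mem hcmem)
        (hint _ hsinc c L hcmem hLmem)
    have h1 : 0 ≤ ∫ t in (0:ℝ)..c, Real.sin (φ t) := by
      refine intervalIntegral.integral_nonneg hc0 (fun t ht => ?_)
      exact hsin_nonneg t ⟨ht.1, ht.2.trans hcltL.le⟩
    have h2 : 0 < ∫ t in c..L, Real.sin (φ t) := by
      refine intervalIntegral_pos_of_pos_on (hint _ hsinc c L hcmem hLmem)
        (fun t ht => ?_) hcltL
      have htm : t ∈ Icc (0:ℝ) L := ⟨hc0.trans ht.1.le, ht.2.le⟩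
      refine Real.sin_pos_of_pos_of_lt_pi ?_ (hφlt t htm)
      have := hbig t ⟨ht.1.le, ht.2.le⟩; linarith
    rw [hy]; linarith [hsplit]
  have hvL : 0 < v L := by
    rw [hv]; simp only [hφL]
    exact div_pos hyL_pos hsinΩ
  refine ⟨hmonoU, ?_, huL, hvL, ?_, ?_, ?_⟩
  · intro s hs hφs
    rw [hu_eq s (hsin_pos s hs hφs).ne']
    exact div_nonneg (hnum s hs) (hsin_nonneg s hs)
  · intro h
    exact absurd (congrArg Prod.fst h) (by simp [huL.ne'])
  · intro h
    have := congrArg Prod.snd h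
    simp only at this
    exact absurd this.symm hyL_pos.ne'
  · have hvL' : v L = y L / Real.sin Ω := by simp only [hv, hφL]
    have huL' : u L = x L - y L * Real.cos Ω / Real.sin Ω := by simp only [hu, hφL]
    refine Prod.ext ?_ ?_
    · simp only [Prod.fst_sub, Prod.smul_fst, smul_eq_mul]
      rw [huL', hvL']; field_simp; ring
    · simp only [Prod.snd_sub, Prod.smul_snd, smul_eq_mul]
      rw [hvL']; field_simp; ring
end

section
/- Existence of an optimal curve: let O, A, B be pairwise distinct, α = (O−A)/OA, β = (B−O)/OB, Ω ∈ (0,π) the oriented angle from α to β, and let 𝓔 be the (nonempty) set of unit-speed W^{2,∞} curves from A to B with tangents α, β at the endpoints and nondecreasing tangent angle. Then δ₀ = inf_{Z ∈ 𝓔} ‖ ‖Z''‖ ‖_{L^∞(0,L(Z))} is strictly positive and is attained: there exists X ∈ 𝓔 with ‖ ‖X''‖ ‖_{L^∞} = δ₀. -/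
open Set

open intervalIntegral

lemma sin_lip (x y : ℝ) : |Real.sin x - Real.sin y| ≤ |x - y| := by
  rw [Real.sin_sub_sin, abs_mul, abs_mul]
  have h1 : |Real.sin ((x - y)/2)| ≤ |(x - y)/2| := Real.abs_sin_le_abs
  have h2 : |Real.cos ((x + y)/2)| ≤ 1 := Real.abs_cos_le_one _
  have h3 : |(x - y)/2| = |x - y|/2 := by rw [abs_div]; norm_num
  calc |(2:ℝ)| * |Real.sin ((x - y)/2)| * |Real.cos ((x + y)/2)|
      ≤ |(2:ℝ)| * |(x-y)/2| * 1 := by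
        apply mul_le_mul (mul_le_mul le_rfl h1 (abs_nonneg _) (abs_nonneg _)) h2
          (abs_nonneg _) (by positivity)
    _ = |x - y| := by rw [h3]; simp; ring

lemma cos_sub_cos_le (x y c : ℝ) (hxy : x ≤ y) (hsx : 0 ≤ Real.sin x)
    (hyx : y - x ≤ c) (hc : 0 ≤ c) :
    Real.cos x - Real.cos y ≤ c * Real.sin x + c^2/2 := by
  have hF : ∀ t : ℝ, HasDerivAt (fun t => t * Real.sin x + (t - x)^2/2)
      (Real.sin x + (t - x)) t := by
    intro t
    have h1 : HasDerivAt (fun t : ℝ => t * Real.sin x) (Real.sin x) t := by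
      simpa using (hasDerivAt_id t).mul_const (Real.sin x)
    have h2 : HasDerivAt (fun t : ℝ => (t - x)^2/2) (t - x) t := by
      have := (((hasDerivAt_id t).sub_const x).pow 2).div_const 2
      simpa [mul_comm] using this
    exact h1.add h2
  have hint : (∫ t in x..y, (Real.sin x + (t - x))) =
      (y * Real.sin x + (y - x)^2/2) - (x * Real.sin x + (x - x)^2/2) := by
    apply integral_eq_sub_of_hasDerivAt (fun t _ => hF t)
    apply Continuous.intervalIntegrable; continuity
  have hmono : (∫ t in x..y, Real.sin t) ≤ ∫ t in x..y, (Real.sin x + (t - x)) := by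
    apply integral_mono_on hxy
    · exact (Real.continuous_sin.intervalIntegrable x y)
    · apply Continuous.intervalIntegrable; continuity
    · intro t ht
      have := (abs_le.1 (sin_lip t x)).2
      have ht' : |t - x| = t - x := abs_of_nonneg (by linarith [ht.1])
      linarith [ht'.symm ▸ this]
  have key : Real.cos x - Real.cos y ≤ (y - x) * Real.sin x + (y - x)^2/2 := by
    rw [← integral_sin]
    calc (∫ t in x..y, Real.sin t) ≤ _ := hmono
      _ = _ := by rw [hint]; ring
  have h1 : (y - x) * Real.sin x ≤ c * Real.sin x := mul_le_mul_of_nonneg_right hyx hsx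
  have h2 : (y - x)^2 ≤ c^2 := by
    have h0 : 0 ≤ y - x := by linarith
    nlinarith
  linarith

lemma key_ineq (L Om K : ℝ) (ψ : ℝ → ℝ) (hL : 0 < L) (hK : 0 ≤ K)
    (hOm0 : 0 ≤ Om) (hOmπ : Om ≤ Real.pi)
    (h0 : ψ 0 = 0) (hΩL : ψ L = Om)
    (hmono : MonotoneOn ψ (Icc 0 L))
    (hcont : ContinuousOn ψ (Icc 0 L))
    (hlip : ∀ s ∈ Icc 0 L, ∀ t ∈ Icc 0 L, |ψ s - ψ t| ≤ K * |s - t|) :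
    1 - Real.cos Om ≤ K * ∫ s in (0:ℝ)..L, Real.sin (ψ s) := by
  have hIcc : ∀ ⦃t⦄, t ∈ Icc (0:ℝ) L → ψ t ∈ Icc 0 Om := by
    intro t ht
    constructor
    · rw [← h0]; exact hmono (left_mem_Icc.2 hL.le) ht ht.1
    · rw [← hΩL]; exact hmono ht (right_mem_Icc.2 hL.le) ht.2
  have main : ∀ n : ℕ, 1 ≤ n →
      1 - Real.cos Om ≤ K * (∫ s in (0:ℝ)..L, Real.sin (ψ s)) + (3/2) * K^2 * L^2 / n := by
    intro n hn
    have hn0 : (0:ℝ) < n := by exact_mod_cast hn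
    set Δ : ℝ := L / n with hΔ
    have hΔpos : 0 < Δ := div_pos hL hn0
    set p : ℕ → ℝ := fun i => i * Δ with hp
    have hpmem : ∀ i : ℕ, i ≤ n → p i ∈ Icc (0:ℝ) L := by
      intro i hi
      constructor
      · positivity
      · have : (i:ℝ) ≤ n := by exact_mod_cast hi
        calc (i:ℝ) * Δ ≤ n * Δ := by nlinarith
          _ = L := by rw [hΔ]; field_simp
    have hp0 : p 0 = 0 := by simp [hp]
    have hpn : p n = L := by simp only [hp, hΔ]; field_simp
    have hstep : ∀ i : ℕ, p (i+1) - p i = Δ := by intro i; simp [hp]; ring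
    -- integrability on each subinterval
    have hintble : ∀ i < n, IntervalIntegrable (fun s => Real.sin (ψ s)) MeasureTheory.volume (p i) (p (i+1)) := by
      intro i hi
      apply ContinuousOn.intervalIntegrable
      apply (Real.continuous_sin.comp_continuousOn (hcont.mono ?_))
      rw [uIcc_of_le (by linarith [hstep i, hΔpos])]
      exact Icc_subset_Icc (hpmem i hi.le).1 (hpmem (i+1) hi).2
    have hsplit : (∑ i ∈ Finset.range n, ∫ s in (p i)..(p (i+1)), Real.sin (ψ s))
        = ∫ s in (0:ℝ)..L, Real.sin (ψ s) := by
      rw [sum_integral_adjacent_intervals hintble, hp0, hpn]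
    have htel : (∑ i ∈ Finset.range n, (Real.cos (ψ (p i)) - Real.cos (ψ (p (i+1)))))
        = 1 - Real.cos Om := by
      rw [Finset.sum_range_sub']
      rw [hp0, hpn, h0, hΩL, Real.cos_zero]
    -- per-term bound
    have hterm : ∀ i < n, Real.cos (ψ (p i)) - Real.cos (ψ (p (i+1)))
        ≤ K * (∫ s in (p i)..(p (i+1)), Real.sin (ψ s)) + (3/2) * (K*Δ)^2 := by
      intro i hi
      have hpi := hpmem i hi.le
      have hpi1 := hpmem (i+1) hi
      have hple : p i ≤ p (i+1) := by linarith [hstep i, hΔpos]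
      set x := ψ (p i) with hx
      set y := ψ (p (i+1)) with hy
      have hxy : x ≤ y := hmono hpi hpi1 hple
      have hsx : 0 ≤ Real.sin x :=
        Real.sin_nonneg_of_nonneg_of_le_pi (hIcc hpi).1 (le_trans (hIcc hpi).2 hOmπ)
      have hyx : y - x ≤ K * Δ := by
        have := hlip (p (i+1)) hpi1 (p i) hpi
        have habs : |p (i+1) - p i| = Δ := by rw [hstep i]; exact abs_of_pos hΔpos
        rw [habs] at this
        calc y - x ≤ |y - x| := le_abs_self _
          _ = |ψ (p (i+1)) - ψ (p i)| := rfl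
          _ ≤ K * Δ := this
      have h1 : Real.cos x - Real.cos y ≤ (K*Δ) * Real.sin x + (K*Δ)^2/2 :=
        cos_sub_cos_le x y (K*Δ) hxy hsx hyx (by positivity)
      -- lower bound for the integral
      have h2 : Δ * (Real.sin x - K * Δ) ≤ ∫ s in (p i)..(p (i+1)), Real.sin (ψ s) := by
        have hconst : (∫ _s in (p i)..(p (i+1)), (Real.sin x - K * Δ))
            = Δ * (Real.sin x - K * Δ) := by
          rw [integral_const, hstep i]; simp [smul_eq_mul]
        rw [← hconst]
        apply integral_mono_on hple
        · apply Continuous.intervalIntegrable; continuity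
        · exact hintble i hi
        · intro t ht
          have htmem : t ∈ Icc (0:ℝ) L := ⟨le_trans hpi.1 ht.1, le_trans ht.2 hpi1.2⟩
          have hlipt := hlip (p i) hpi t htmem
          have htd : |p i - t| ≤ Δ := by
            rw [abs_sub_comm, abs_of_nonneg (by linarith [ht.1])]
            linarith [ht.2, hstep i]
          have : |x - ψ t| ≤ K * Δ :=
            le_trans hlipt (by rw [abs_sub_comm]; exact mul_le_mul_of_nonneg_left (by rwa [abs_sub_comm] at htd) hK)
          have hsl := (abs_le.1 (sin_lip x (ψ t))).2
          have := le_trans hsl this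
          linarith
      calc Real.cos x - Real.cos y ≤ (K*Δ) * Real.sin x + (K*Δ)^2/2 := h1
        _ = K * (Δ * (Real.sin x - K * Δ)) + K^2*Δ^2 + (K*Δ)^2/2 := by ring
        _ ≤ K * (∫ s in (p i)..(p (i+1)), Real.sin (ψ s)) + K^2*Δ^2 + (K*Δ)^2/2 := by
            have := mul_le_mul_of_nonneg_left h2 hK
            linarith
        _ = K * (∫ s in (p i)..(p (i+1)), Real.sin (ψ s)) + (3/2) * (K*Δ)^2 := by ring
    -- sum up
    have hsum : 1 - Real.cos Om ≤
        K * (∫ s in (0:ℝ)..L, Real.sin (ψ s)) + n * ((3/2) * (K*Δ)^2) := by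
      rw [← htel, ← hsplit, Finset.mul_sum]
      calc (∑ i ∈ Finset.range n, (Real.cos (ψ (p i)) - Real.cos (ψ (p (i+1)))))
          ≤ ∑ i ∈ Finset.range n, (K * (∫ s in (p i)..(p (i+1)), Real.sin (ψ s)) + (3/2) * (K*Δ)^2) := by
            apply Finset.sum_le_sum
            intro i hi
            exact hterm i (Finset.mem_range.1 hi)
        _ = _ := by rw [Finset.sum_add_distrib, Finset.sum_const, Finset.card_range]
                    simp [nsmul_eq_mul]
    have : (n:ℝ) * ((3/2) * (K*Δ)^2) = (3/2) * K^2 * L^2 / n := by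
      rw [hΔ]; field_simp
    linarith [hsum, this.symm.le]
  -- take n → ∞
  apply le_of_forall_pos_le_add
  intro ε hε
  set C : ℝ := (3/2) * K^2 * L^2 with hC
  have hC0 : 0 ≤ C := by positivity
  obtain ⟨n, hn⟩ := exists_nat_gt (max 1 (C / ε))
  have hn1 : 1 ≤ n := by
    have : (1:ℝ) < n := lt_of_le_of_lt (le_max_left _ _) hn
    exact_mod_cast this.le
  have hn0 : (0:ℝ) < n := by positivity
  have hCn : C / n ≤ ε := by
    rw [div_le_iff₀ hn0]
    have : C / ε < n := lt_of_le_of_lt (le_max_right _ _) hn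
    calc C = (C/ε) * ε := by field_simp
      _ ≤ n * ε := mul_le_mul_of_nonneg_right this.le hε.le
      _ = ε * n := by ring
  linarith [main n hn1]

lemma tan_half_facts (Om : ℝ) (h1 : 0 < Om) (h2 : Om < Real.pi) :
    Real.tan (Om/2) * Real.sin Om = 1 - Real.cos Om ∧
    Real.tan (Om/2) * (1 + Real.cos Om) = Real.sin Om ∧
    0 < Real.tan (Om/2) := by
  have hc : 0 < Real.cos (Om/2) := by
    apply Real.cos_pos_of_mem_Ioo
    constructor <;> [linarith [Real.pi_pos]; linarith]
  have hsin2 : Real.sin Om = 2 * Real.sin (Om/2) * Real.cos (Om/2) := by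
    rw [show Om = 2 * (Om/2) by ring, Real.sin_two_mul]; ring_nf
  have hcos2 : Real.cos Om = 2 * Real.cos (Om/2)^2 - 1 := by
    rw [show Om = 2 * (Om/2) by ring, Real.cos_two_mul]; ring_nf
  have hpyth := Real.sin_sq_add_cos_sq (Om/2)
  have hs : 0 < Real.sin (Om/2) := Real.sin_pos_of_pos_of_lt_pi (by linarith) (by linarith)
  have ht : Real.tan (Om/2) = Real.sin (Om/2) / Real.cos (Om/2) := Real.tan_eq_sin_div_cos _
  refine ⟨?_, ?_, ?_⟩
  · rw [ht, hsin2, hcos2]; field_simp; nlinarith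
  · rw [ht, hsin2, hcos2]; field_simp; ring
  · rw [ht]; positivity

/-- The maximal curvature `‖‖X''‖‖_{L^∞}` of a curve of 𝓔, as the least Lipschitz
constant of its tangent angle. -/
noncomputable def maxCurv {A B α : ℂ} {Ω : ℝ} (c : CurveE A B α Ω) : ℝ :=
  sInf {K : ℝ | 0 ≤ K ∧
    ∀ s ∈ Icc 0 c.L, ∀ t ∈ Icc 0 c.L, |c.φ s - c.φ t| ≤ K * |s - t|}

lemma curve_integral {A B αc : ℂ} {Om : ℝ} (c : CurveE A B αc Om) (f : ℂ →L[ℝ] ℝ) :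
    ∫ s in (0:ℝ)..c.L, f (αc * Complex.exp ((c.φ s : ℂ) * Complex.I)) = f (B - A) := by
  have hXcont : ContinuousOn c.X (Icc 0 c.L) :=
    fun t ht => (c.hderiv t ht).continuousWithinAt
  have hicont : ContinuousOn (fun s => f (αc * Complex.exp ((c.φ s : ℂ) * Complex.I)))
      (Icc 0 c.L) := by
    apply f.continuous.comp_continuousOn
    apply ContinuousOn.mul continuousOn_const
    apply Complex.continuous_exp.comp_continuousOn
    exact (Complex.continuous_ofReal.comp_continuousOn c.hcont).mul continuousOn_const
  have := integral_eq_sub_of_hasDeriv_right_of_le (f' := fun s => f (αc * Complex.exp ((c.φ s : ℂ) * Complex.I))) c.hL.le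
    (f.continuous.comp_continuousOn hXcont)
    (fun t ht => by
      have hd := (c.hderiv t (Ioo_subset_Icc_self ht)).hasDerivAt
        (Icc_mem_nhds ht.1 ht.2)
      exact (f.hasFDerivAt.comp_hasDerivAt t hd).hasDerivWithinAt)
    ((hicont.mono (by rw [uIcc_of_le c.hL.le])).intervalIntegrable)
  rw [this]
  simp only [Function.comp_apply, c.hXL, c.hX0]
  exact (map_sub f B A).symm

lemma maxCurv_facts {A B αc : ℂ} {Om : ℝ} (c : CurveE A B αc Om) :
    0 ≤ maxCurv c ∧
    (∀ s ∈ Icc 0 c.L, ∀ t ∈ Icc 0 c.L, |c.φ s - c.φ t| ≤ maxCurv c * |s - t|) := by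
  set S := {K : ℝ | 0 ≤ K ∧
    ∀ s ∈ Icc 0 c.L, ∀ t ∈ Icc 0 c.L, |c.φ s - c.φ t| ≤ K * |s - t|} with hS
  have hSne : S.Nonempty := by
    obtain ⟨K', hK'⟩ := c.hW2
    exact ⟨max K' 0, le_max_right _ _, fun s hs t ht =>
      (hK' s hs t ht).trans (mul_le_mul_of_nonneg_right (le_max_left _ _) (abs_nonneg _))⟩
  have hbdd : BddBelow S := ⟨0, fun x hx => hx.1⟩
  have h0 : 0 ≤ maxCurv c := le_csInf hSne (fun x hx => hx.1)
  refine ⟨h0, fun s hs t ht => ?_⟩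
  rcases eq_or_ne s t with h | h
  · simp [h]
  · have hst : 0 < |s - t| := abs_pos.2 (sub_ne_zero.2 h)
    rw [← div_le_iff₀ hst] at *
    apply le_csInf hSne
    intro K hK
    rw [div_le_iff₀ hst]
    exact hK.2 s hs t ht

lemma maxCurv_le {A B αc : ℂ} {Om : ℝ} (c : CurveE A B αc Om) (K : ℝ) (hK0 : 0 ≤ K)
    (hK : ∀ s ∈ Icc 0 c.L, ∀ t ∈ Icc 0 c.L, |c.φ s - c.φ t| ≤ K * |s - t|) :
    maxCurv c ≤ K :=
  csInf_le ⟨0, fun x hx => hx.1⟩ ⟨hK0, hK⟩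

lemma lower_bound (O A B : ℂ) (hOA : O ≠ A) (hOB : O ≠ B)
    (α β : ℂ)
    (hα : α = (O - A) / (‖O - A‖ : ℂ))
    (hβ : β = (B - O) / (‖B - O‖ : ℂ))
    (Ω : ℝ) (hΩ : Ω ∈ Ioo 0 Real.pi)
    (hang : β = α * Complex.exp ((Ω : ℂ) * Complex.I))
    (c : CurveE A B α Ω) :
    Real.tan (Ω/2) / min (‖O - A‖) (‖B - O‖) ≤ maxCurv c := by
  set a : ℝ := ‖O - A‖ with ha
  set b : ℝ := ‖B - O‖ with hb
  have hOA' : O - A ≠ 0 := sub_ne_zero.2 hOA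
  have hBO' : B - O ≠ 0 := sub_ne_zero.2 hOB.symm
  have ha0 : 0 < a := by simpa [ha] using norm_pos_iff.mpr hOA'
  have hb0 : 0 < b := by simpa [hb] using norm_pos_iff.mpr hBO'
  have hαne : α ≠ 0 := by
    rw [hα]
    exact div_ne_zero hOA' (by exact_mod_cast (ne_of_gt ha0))
  have haC : (a:ℂ) ≠ 0 := by exact_mod_cast ha0.ne'
  have hbC : (b:ℂ) ≠ 0 := by exact_mod_cast hb0.ne'
  have hBA : B - A = α * ((a : ℂ) + (b : ℂ) * Complex.exp ((Ω:ℂ) * Complex.I)) := by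
    have h1 : α * (a : ℂ) = O - A := by
      rw [hα]; field_simp
    have h2 : (α * Complex.exp ((Ω:ℂ) * Complex.I)) * (b : ℂ) = B - O := by
      rw [← hang, hβ]; field_simp
    calc B - A = (B - O) + (O - A) := by ring
      _ = (α * Complex.exp ((Ω:ℂ) * Complex.I)) * (b : ℂ) + α * (a : ℂ) := by rw [h1, h2]
      _ = α * ((a : ℂ) + (b : ℂ) * Complex.exp ((Ω:ℂ) * Complex.I)) := by ring
  set K := maxCurv c with hKdef
  obtain ⟨hK0, hKlip⟩ := maxCurv_facts c
  -- first identity : ∫ sin φ = b sin Ω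
  set f₁ : ℂ →L[ℝ] ℝ := Complex.imCLM.comp (ContinuousLinearMap.mul ℝ ℂ α⁻¹) with hf₁
  have e1 : ∀ s : ℝ, f₁ (α * Complex.exp ((c.φ s : ℂ) * Complex.I)) = Real.sin (c.φ s) := by
    intro s
    simp only [hf₁, ContinuousLinearMap.comp_apply, ContinuousLinearMap.mul_apply',
      Complex.imCLM_apply]
    rw [inv_mul_cancel_left₀ hαne, Complex.exp_ofReal_mul_I_im]
  have i1 : (∫ s in (0:ℝ)..c.L, Real.sin (c.φ s)) = b * Real.sin Ω := by
    have := curve_integral c f₁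
    simp_rw [e1] at this
    rw [this, hBA, hf₁]
    simp only [ContinuousLinearMap.comp_apply, ContinuousLinearMap.mul_apply',
      Complex.imCLM_apply]
    rw [inv_mul_cancel_left₀ hαne]
    simp [Complex.add_im, Complex.mul_im, Complex.exp_ofReal_mul_I_im,
      Complex.exp_ofReal_mul_I_re]
  -- second identity : ∫ sin (Ω - φ) = a sin Ω
  set f₂ : ℂ →L[ℝ] ℝ := Complex.imCLM.comp
    ((ContinuousLinearMap.mul ℝ ℂ (Complex.exp ((Ω:ℂ) * Complex.I))).comp
      ((Complex.conjCLE.toContinuousLinearMap).comp (ContinuousLinearMap.mul ℝ ℂ α⁻¹))) with hf₂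
  have e2 : ∀ s : ℝ, f₂ (α * Complex.exp ((c.φ s : ℂ) * Complex.I))
      = Real.sin (Ω - c.φ s) := by
    intro s
    simp only [hf₂, ContinuousLinearMap.comp_apply, ContinuousLinearMap.mul_apply',
      Complex.imCLM_apply, ContinuousLinearEquiv.coe_coe, Complex.conjCLE_apply]
    rw [inv_mul_cancel_left₀ hαne, ← Complex.exp_conj]
    rw [show (starRingEnd ℂ) ((c.φ s : ℂ) * Complex.I) = -((c.φ s : ℂ) * Complex.I) by
      simp [Complex.conj_I]]
    rw [← Complex.exp_add]
    rw [show (Ω:ℂ) * Complex.I + -((c.φ s : ℂ) * Complex.I) = ((Ω - c.φ s : ℝ) : ℂ) * Complex.I by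
      push_cast; ring]
    rw [Complex.exp_ofReal_mul_I_im]
  have i2 : (∫ s in (0:ℝ)..c.L, Real.sin (Ω - c.φ s)) = a * Real.sin Ω := by
    have := curve_integral c f₂
    simp_rw [e2] at this
    rw [this, hBA, hf₂]
    simp only [ContinuousLinearMap.comp_apply, ContinuousLinearMap.mul_apply',
      Complex.imCLM_apply, ContinuousLinearEquiv.coe_coe, Complex.conjCLE_apply]
    rw [inv_mul_cancel_left₀ hαne]
    rw [map_add, map_mul, ← Complex.exp_conj]
    rw [show (starRingEnd ℂ) ((Ω:ℂ) * Complex.I) = -((Ω:ℂ) * Complex.I) by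
      simp [Complex.conj_I]]
    rw [mul_add]
    rw [show Complex.exp ((Ω:ℂ)*Complex.I) * ((starRingEnd ℂ) (b:ℂ) * Complex.exp (-((Ω:ℂ)*Complex.I))) = (starRingEnd ℂ) (b:ℂ) * (Complex.exp ((Ω:ℂ)*Complex.I) * Complex.exp (-((Ω:ℂ)*Complex.I))) from by ring,
      ← Complex.exp_add, add_neg_cancel, Complex.exp_zero, mul_one]
    simp [Complex.add_im, Complex.mul_im, Complex.exp_ofReal_mul_I_im,
      Complex.exp_ofReal_mul_I_re, Complex.conj_ofReal]
    ring
  -- apply key_ineq to φ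
  have k1 : 1 - Real.cos Ω ≤ K * (b * Real.sin Ω) := by
    rw [← i1]
    exact key_ineq c.L Ω K c.φ c.hL hK0 hΩ.1.le hΩ.2.le c.hφ0 c.hφL c.hmono c.hcont hKlip
  -- apply key_ineq to the reversed curve angle
  have k2 : 1 - Real.cos Ω ≤ K * (a * Real.sin Ω) := by
    set ψ : ℝ → ℝ := fun s => Ω - c.φ (c.L - s) with hψ
    have hrev : ∀ s ∈ Icc (0:ℝ) c.L, c.L - s ∈ Icc (0:ℝ) c.L := by
      intro s hs; constructor <;> [linarith [hs.2]; linarith [hs.1]]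
    have hψint : (∫ s in (0:ℝ)..c.L, Real.sin (ψ s)) = a * Real.sin Ω := by
      rw [← i2]
      have := integral_comp_sub_left (fun u => Real.sin (Ω - c.φ u)) c.L
        (a := (0:ℝ)) (b := c.L)
      simpa using this
    rw [← hψint]
    apply key_ineq c.L Ω K ψ c.hL hK0 hΩ.1.le hΩ.2.le
    · simp [hψ, c.hφL]
    · simp [hψ, c.hφ0]
    · intro s hs t ht hst
      have := c.hmono (hrev t ht) (hrev s hs) (by linarith)
      simp only [hψ]; linarith
    · apply ContinuousOn.sub continuousOn_const
      apply c.hcont.comp ((continuous_const.sub continuous_id).continuousOn)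
      intro s hs; exact hrev s hs
    · intro s hs t ht
      have := hKlip (c.L - t) (hrev t ht) (c.L - s) (hrev s hs)
      have habs : |c.L - t - (c.L - s)| = |s - t| := by
        rw [show c.L - t - (c.L - s) = s - t by ring]
      simp only [hψ]
      rw [show Ω - c.φ (c.L - s) - (Ω - c.φ (c.L - t)) = c.φ (c.L - t) - c.φ (c.L - s) by ring]
      rw [← habs]; exact this
  -- combine
  obtain ⟨ht1, _, ht3⟩ := tan_half_facts Ω hΩ.1 hΩ.2
  have hsinΩ : 0 < Real.sin Ω := Real.sin_pos_of_pos_of_lt_pi hΩ.1 hΩ.2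
  set m : ℝ := min a b with hm
  have hm0 : 0 < m := lt_min ha0 hb0
  have hmin : 1 - Real.cos Ω ≤ K * (m * Real.sin Ω) := by
    rcases min_cases a b with ⟨h, _⟩ | ⟨h, _⟩ <;> rw [hm, h]
    exacts [k2, k1]
  rw [div_le_iff₀ hm0]
  have : Real.tan (Ω/2) * Real.sin Ω ≤ K * m * Real.sin Ω := by
    rw [ht1]; calc 1 - Real.cos Ω ≤ K * (m * Real.sin Ω) := hmin
      _ = K * m * Real.sin Ω := by ring
  exact le_of_mul_le_mul_right this hsinΩ

lemma exists_opt_curve (A B αc : ℂ) (Om a b : ℝ) (ha : 0 < a) (hb : 0 < b)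
    (hOm : Om ∈ Ioo 0 Real.pi) (hαne : αc ≠ 0)
    (hBA : B - A = αc * ((a:ℂ) + (b:ℂ) * Complex.exp ((Om:ℂ) * Complex.I))) :
    ∃ c : CurveE A B αc Om,
      ∀ s ∈ Icc (0:ℝ) c.L, ∀ t ∈ Icc (0:ℝ) c.L,
        |c.φ s - c.φ t| ≤ (Real.tan (Om/2) / min a b) * |s - t| := by
  obtain ⟨ht1, ht2, ht3⟩ := tan_half_facts Om hOm.1 hOm.2
  set T : ℝ := Real.tan (Om/2) with hT
  set m : ℝ := min a b with hm
  have hm0 : 0 < m := lt_min ha hb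
  set K0 : ℝ := T / m with hK0
  have hK0pos : 0 < K0 := div_pos ht3 hm0
  set r : ℝ := m / T with hr
  have hr0 : 0 < r := div_pos hm0 ht3
  have hK0r : K0 * r = 1 := by rw [hK0, hr]; field_simp [ht3.ne', hm0.ne']
  set s1 : ℝ := a - m with hs1def
  have hs1 : 0 ≤ s1 := by simp [hs1def, hm]
  set s2 : ℝ := s1 + r * Om with hs2def
  have hs12 : s1 < s2 := by
    have : 0 < r * Om := mul_pos hr0 hOm.1
    simp [hs2def]; linarith
  set L0 : ℝ := s2 + (b - m) with hL0def
  have hs2L : s2 ≤ L0 := by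
    have : m ≤ b := min_le_right a b
    simp [hL0def]; linarith
  have hL0pos : 0 < L0 := by linarith
  set φ0 : ℝ → ℝ := fun s => K0 * (min (max s s1) s2 - s1) with hφ0def
  set f : ℝ → ℂ := fun τ => Complex.exp ((φ0 τ : ℂ) * Complex.I) with hfdef
  -- values of φ0
  have hφ0a : ∀ s : ℝ, s ≤ s1 → φ0 s = 0 := by
    intro s hs
    simp [hφ0def, max_eq_right hs, min_eq_left hs12.le]
  have hφ0b : ∀ s : ℝ, s1 ≤ s → s ≤ s2 → φ0 s = K0 * (s - s1) := by
    intro s h1 h2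
    simp [hφ0def, max_eq_left h1, min_eq_left h2]
  have hK0s2 : K0 * (s2 - s1) = Om := by
    have h' : s2 - s1 = r * Om := by rw [hs2def]; ring
    rw [h', ← mul_assoc, hK0r, one_mul]
  have hφ0c : ∀ s : ℝ, s2 ≤ s → φ0 s = Om := by
    intro s hs
    have hmax : s2 ≤ max s s1 := le_trans hs (le_max_left _ _)
    rw [hφ0def]
    simp only [min_eq_right hmax]
    exact hK0s2
  have hφcont : Continuous φ0 := by
    apply continuous_const.mul
    exact (((continuous_id.max continuous_const).min continuous_const).sub continuous_const)
  have hfc : Continuous f :=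
    Complex.continuous_exp.comp ((Complex.continuous_ofReal.comp hφcont).mul continuous_const)
  have hmono0 : Monotone φ0 := by
    intro s t hst
    apply mul_le_mul_of_nonneg_left _ hK0pos.le
    apply sub_le_sub_right
    exact min_le_min (max_le_max hst le_rfl) le_rfl
  have hlip0 : ∀ s t : ℝ, |φ0 s - φ0 t| ≤ K0 * |s - t| := by
    intro s t
    have h1 : φ0 s - φ0 t = K0 * (min (max s s1) s2 - min (max t s1) s2) := by
      rw [hφ0def]; ring
    rw [h1, abs_mul, abs_of_pos hK0pos]
    apply mul_le_mul_of_nonneg_left _ hK0pos.le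
    calc |min (max s s1) s2 - min (max t s1) s2|
        ≤ max |max s s1 - max t s1| |s2 - s2| := abs_min_sub_min_le_max _ _ _ _
      _ = |max s s1 - max t s1| := by simp
      _ ≤ |s - t| := abs_max_sub_max_le_abs _ _ _
  -- derivative of X0
  set X0 : ℝ → ℂ := fun s => A + αc * ∫ τ in (0:ℝ)..s, f τ with hX0def
  have hderivAt : ∀ s : ℝ, HasDerivAt X0 (αc * f s) s := by
    intro s
    have hI := intervalIntegral.integral_hasDerivAt_right
      (hfc.intervalIntegrable 0 s) (hfc.stronglyMeasurableAtFilter _ _) hfc.continuousAt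
    exact (hI.const_mul αc).const_add A
  -- the three pieces of the integral
  have hi1 : (∫ τ in (0:ℝ)..s1, f τ) = ((s1:ℝ):ℂ) := by
    rw [intervalIntegral.integral_congr (g := fun _ => (1:ℂ))
      (fun τ hτ => by
        rw [uIcc_of_le hs1] at hτ
        simp [hfdef, hφ0a τ hτ.2])]
    simp
  have hi3 : (∫ τ in s2..L0, f τ) = ((b - m : ℝ):ℂ) * Complex.exp ((Om:ℂ) * Complex.I) := by
    rw [intervalIntegral.integral_congr (g := fun _ => Complex.exp ((Om:ℂ) * Complex.I))
      (fun τ hτ => by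
        rw [uIcc_of_le hs2L] at hτ
        simp [hfdef, hφ0c τ hτ.1])]
    rw [intervalIntegral.integral_const]
    rw [show L0 - s2 = b - m by rw [hL0def]; ring]
    simp [Complex.real_smul]
  have hK0C : ((K0:ℝ):ℂ) ≠ 0 := by exact_mod_cast hK0pos.ne'
  have hK0I : ((K0:ℝ):ℂ) * Complex.I ≠ 0 := mul_ne_zero hK0C Complex.I_ne_zero
  have hi2 : (∫ τ in s1..s2, f τ)
      = (Complex.exp ((Om:ℂ) * Complex.I) - 1) * (((K0:ℝ):ℂ) * Complex.I)⁻¹ := by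
    have hcongr : EqOn f (fun τ : ℝ => Complex.exp (((K0:ℝ):ℂ) * ((τ:ℂ) - (s1:ℂ)) * Complex.I))
        (uIcc s1 s2) := by
      intro τ hτ
      rw [uIcc_of_le hs12.le] at hτ
      simp only [hfdef]
      rw [hφ0b τ hτ.1 hτ.2]
      push_cast
      ring_nf
    rw [intervalIntegral.integral_congr hcongr]
    set G : ℝ → ℂ := fun τ =>
      Complex.exp (((K0:ℝ):ℂ) * ((τ:ℂ) - (s1:ℂ)) * Complex.I) * (((K0:ℝ):ℂ) * Complex.I)⁻¹
      with hGdef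
    have hG : ∀ τ : ℝ, HasDerivAt G
        (Complex.exp (((K0:ℝ):ℂ) * ((τ:ℂ) - (s1:ℂ)) * Complex.I)) τ := by
      intro τ
      have hid : HasDerivAt (fun τ : ℝ => ((τ:ℂ) - (s1:ℂ))) 1 τ := by
        simpa using (Complex.ofRealCLM.hasDerivAt (x := τ)).sub_const ((s1:ℝ):ℂ)
      have hin : HasDerivAt (fun τ : ℝ => ((K0:ℝ):ℂ) * ((τ:ℂ) - (s1:ℂ)) * Complex.I)
          (((K0:ℝ):ℂ) * Complex.I) τ := by
        have := (hid.const_mul ((K0:ℝ):ℂ)).mul_const Complex.I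
        simpa using this
      have := hin.cexp.mul_const ((((K0:ℝ):ℂ)) * Complex.I)⁻¹
      rw [mul_inv_cancel_right₀ hK0I] at this
      exact this
    have hgc : Continuous (fun τ : ℝ =>
        Complex.exp (((K0:ℝ):ℂ) * ((τ:ℂ) - (s1:ℂ)) * Complex.I)) :=
      Complex.continuous_exp.comp
        ((continuous_const.mul (Complex.continuous_ofReal.sub continuous_const)).mul
          continuous_const)
    rw [intervalIntegral.integral_eq_sub_of_hasDerivAt (fun τ _ => hG τ)
      (hgc.intervalIntegrable _ _)]
    simp only [hGdef]
    have hc2 : ((K0:ℝ):ℂ) * (((s2:ℝ):ℂ) - ((s1:ℝ):ℂ)) = ((Om:ℝ):ℂ) := by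
      push_cast [← hK0s2]; ring
    have hc1 : ((K0:ℝ):ℂ) * (((s1:ℝ):ℂ) - ((s1:ℝ):ℂ)) = 0 := by ring
    rw [show ((K0:ℝ):ℂ) * (((s2:ℝ):ℂ) - ((s1:ℝ):ℂ)) * Complex.I = ((Om:ℝ):ℂ) * Complex.I by
        rw [hc2],
      show ((K0:ℝ):ℂ) * (((s1:ℝ):ℂ) - ((s1:ℝ):ℂ)) * Complex.I = 0 by rw [hc1]; ring]
    rw [Complex.exp_zero]
    ring
  -- the key complex identity
  have hkey : Complex.exp ((Om:ℂ) * Complex.I) - 1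
      = (T:ℂ) * Complex.I * (1 + Complex.exp ((Om:ℂ) * Complex.I)) := by
    apply Complex.ext <;>
      simp only [Complex.sub_re, Complex.sub_im, Complex.mul_re, Complex.mul_im,
        Complex.add_re, Complex.add_im, Complex.I_re, Complex.I_im, Complex.ofReal_re,
        Complex.ofReal_im, Complex.exp_ofReal_mul_I_re, Complex.exp_ofReal_mul_I_im,
        Complex.one_re, Complex.one_im] <;> ring_nf <;> nlinarith [ht1, ht2]
  have hmid : (Complex.exp ((Om:ℂ) * Complex.I) - 1) * (((K0:ℝ):ℂ) * Complex.I)⁻¹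
      = ((m:ℝ):ℂ) * (1 + Complex.exp ((Om:ℂ) * Complex.I)) := by
    rw [hkey]
    have hmC : ((m:ℝ):ℂ) ≠ 0 := by exact_mod_cast hm0.ne'
    have hTm : (T:ℂ) = ((K0:ℝ):ℂ) * ((m:ℝ):ℂ) := by
      rw [hK0]; push_cast; field_simp
    rw [hTm]
    field_simp
  have hint : (∫ τ in (0:ℝ)..L0, f τ) = (a:ℂ) + (b:ℂ) * Complex.exp ((Om:ℂ) * Complex.I) := by
    have h12 : (∫ τ in (0:ℝ)..s2, f τ) = (∫ τ in (0:ℝ)..s1, f τ) + ∫ τ in s1..s2, f τ :=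
      (intervalIntegral.integral_add_adjacent_intervals
        (hfc.intervalIntegrable 0 s1) (hfc.intervalIntegrable s1 s2)).symm
    have h123 : (∫ τ in (0:ℝ)..L0, f τ) = (∫ τ in (0:ℝ)..s2, f τ) + ∫ τ in s2..L0, f τ :=
      (intervalIntegral.integral_add_adjacent_intervals
        (hfc.intervalIntegrable 0 s2) (hfc.intervalIntegrable s2 L0)).symm
    rw [h123, h12, hi1, hi2, hi3, hmid]
    rw [show ((s1:ℝ):ℂ) = (a:ℂ) - (m:ℂ) by rw [hs1def]; push_cast; ring]
    push_cast
    ring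
  -- build the curve
  refine ⟨⟨L0, X0, φ0, hL0pos, ?_, ?_, ?_, ?_, hmono0.monotoneOn _, hφcont.continuousOn,
      fun s _ => (hderivAt s).hasDerivWithinAt, ⟨K0, fun s _ t _ => hlip0 s t⟩⟩,
    fun s _ t _ => hlip0 s t⟩
  · simp [hX0def]
  · simp only [hX0def]
    rw [hint, ← hBA]; ring
  · exact hφ0a 0 hs1
  · exact hφ0c L0 hs2L

/-- Existence of an optimal curve: `δ₀ = inf_{Z ∈ 𝓔} ‖‖Z''‖‖_{L^∞}` is strictly
positive and attained by some curve of 𝓔. -/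
theorem stmt15 (O A B : ℂ) (hOA : O ≠ A) (hOB : O ≠ B) (hAB : A ≠ B)
    (α β : ℂ)
    (hα : α = (O - A) / (‖O - A‖ : ℂ))
    (hβ : β = (B - O) / (‖B - O‖ : ℂ))
    (Ω : ℝ) (hΩ : Ω ∈ Ioo 0 Real.pi)
    (hang : β = α * Complex.exp ((Ω : ℂ) * Complex.I))
    (hne : Nonempty (CurveE A B α Ω)) :
    0 < (⨅ c : CurveE A B α Ω, maxCurv c) ∧
    ∃ c : CurveE A B α Ω, maxCurv c = ⨅ c' : CurveE A B α Ω, maxCurv c' := by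
  set a : ℝ := ‖O - A‖ with ha
  set b : ℝ := ‖B - O‖ with hb
  have hOA' : O - A ≠ 0 := sub_ne_zero.2 hOA
  have hBO' : B - O ≠ 0 := sub_ne_zero.2 hOB.symm
  have ha0 : 0 < a := by simpa [ha] using norm_pos_iff.mpr hOA'
  have hb0 : 0 < b := by simpa [hb] using norm_pos_iff.mpr hBO'
  have haC : (a:ℂ) ≠ 0 := by exact_mod_cast ha0.ne'
  have hbC : (b:ℂ) ≠ 0 := by exact_mod_cast hb0.ne'
  have hαne : α ≠ 0 := by
    rw [hα]
    exact div_ne_zero hOA' (by exact_mod_cast (ne_of_gt ha0))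
  have hBA : B - A = α * ((a : ℂ) + (b : ℂ) * Complex.exp ((Ω:ℂ) * Complex.I)) := by
    have h1 : α * (a : ℂ) = O - A := by
      rw [hα]; field_simp
    have h2 : (α * Complex.exp ((Ω:ℂ) * Complex.I)) * (b : ℂ) = B - O := by
      rw [← hang, hβ]; field_simp
    calc B - A = (B - O) + (O - A) := by ring
      _ = (α * Complex.exp ((Ω:ℂ) * Complex.I)) * (b : ℂ) + α * (a : ℂ) := by rw [h1, h2]
      _ = α * ((a : ℂ) + (b : ℂ) * Complex.exp ((Ω:ℂ) * Complex.I)) := by ring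
  set lb : ℝ := Real.tan (Ω/2) / min a b with hlb
  obtain ⟨_, _, ht3⟩ := tan_half_facts Ω hΩ.1 hΩ.2
  have hlb_pos : 0 < lb := div_pos ht3 (lt_min ha0 hb0)
  have hlow : ∀ c : CurveE A B α Ω, lb ≤ maxCurv c := fun c =>
    lower_bound O A B hOA hOB α β hα hβ Ω hΩ hang c
  obtain ⟨c0, hc0⟩ := exists_opt_curve A B α Ω a b ha0 hb0 hΩ hαne hBA
  have hup : maxCurv c0 ≤ lb := maxCurv_le c0 lb hlb_pos.le hc0
  have hbdd : BddBelow (Set.range fun c : CurveE A B α Ω => maxCurv c) := by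
    refine ⟨lb, ?_⟩
    rintro x ⟨c, rfl⟩
    exact hlow c
  have hinf_ge : lb ≤ ⨅ c : CurveE A B α Ω, maxCurv c := le_ciInf hlow
  have hinf_le : (⨅ c : CurveE A B α Ω, maxCurv c) ≤ maxCurv c0 := ciInf_le hbdd c0
  exact ⟨lt_of_lt_of_le hlb_pos hinf_ge,
    ⟨c0, le_antisymm (le_trans hup hinf_ge) hinf_le⟩⟩
end

section
/- Uniform positive lower bound for maximal curvature: there exists δ > 0 depending only on O, A, B (indeed δ = Ω cos(Ω/2)/b̃ works) such that every curve X ∈ 𝓔 satisfies ‖ ‖X''‖ ‖_{L^∞(0,L)} ≥ δ. -/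
open Set

lemma keylem (A B α : ℂ) (Ω : ℝ) (hΩ : Ω ∈ Ioo 0 Real.pi)
    (hα1 : ‖α‖ = 1) (c : CurveE A B α Ω) :
    c.L * Real.cos (Ω / 2) ≤
      ((B - A) * (starRingEnd ℂ) (α * Complex.exp (((Ω / 2 : ℝ) : ℂ) * Complex.I))).re := by
  set L := c.L with hLdef
  have hL0 : (0:ℝ) ≤ L := c.hL.le
  set f' : ℝ → ℂ := fun s => α * Complex.exp ((c.φ s : ℂ) * Complex.I) with hf'
  have hf'cont : ContinuousOn f' (Icc 0 L) := by
    apply continuousOn_const.mul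
    exact Complex.continuous_exp.comp_continuousOn
      ((Complex.continuous_ofReal.comp_continuousOn c.hcont).mul continuousOn_const)
  have hint : IntervalIntegrable f' MeasureTheory.volume 0 L := by
    apply ContinuousOn.intervalIntegrable
    rwa [uIcc_of_le hL0]
  have hXcont : ContinuousOn c.X (Icc 0 L) := fun s hs => (c.hderiv s hs).continuousWithinAt
  have hftc : ∫ s in (0:ℝ)..L, f' s = B - A := by
    rw [intervalIntegral.integral_eq_sub_of_hasDeriv_right_of_le hL0 hXcont
      (fun x hx => (c.hderiv x ⟨hx.1.le, hx.2.le⟩).mono_of_mem_nhdsWithin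
        (nhdsWithin_le_nhds (Icc_mem_nhds hx.1 hx.2))) hint, c.hX0, c.hXL]
  -- pointwise real part
  have hαα : α * (starRingEnd ℂ) α = 1 := by
    rw [Complex.mul_conj, Complex.normSq_eq_norm_sq, hα1]; norm_num
  have hpt : ∀ s, (f' s * (starRingEnd ℂ) (α * Complex.exp (((Ω / 2 : ℝ) : ℂ) * Complex.I))).re
      = Real.cos (c.φ s - Ω / 2) := by
    intro s
    have : f' s * (starRingEnd ℂ) (α * Complex.exp (((Ω / 2 : ℝ) : ℂ) * Complex.I))
        = Complex.exp (((c.φ s - Ω / 2 : ℝ) : ℂ) * Complex.I) := by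
      rw [map_mul, ← Complex.exp_conj]
      have hconj : (starRingEnd ℂ) (((Ω / 2 : ℝ) : ℂ) * Complex.I)
          = -(((Ω / 2 : ℝ) : ℂ) * Complex.I) := by
        rw [map_mul, Complex.conj_ofReal, Complex.conj_I, mul_neg]
      rw [hconj, hf']
      have : α * Complex.exp ((c.φ s : ℂ) * Complex.I) *
          ((starRingEnd ℂ) α * Complex.exp (-(((Ω / 2 : ℝ) : ℂ) * Complex.I)))
          = (α * (starRingEnd ℂ) α) *
            (Complex.exp ((c.φ s : ℂ) * Complex.I) *
             Complex.exp (-(((Ω / 2 : ℝ) : ℂ) * Complex.I))) := by ring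
      rw [this, hαα, one_mul, ← Complex.exp_add]
      congr 1
      push_cast
      ring
    rw [this, Complex.exp_ofReal_mul_I_re]
  -- bound on φ
  have hφmem : ∀ s ∈ Icc 0 L, c.φ s ∈ Icc 0 Ω := by
    intro s hs
    constructor
    · have h0 := c.hmono (left_mem_Icc.2 hL0) hs hs.1
      rwa [c.hφ0] at h0
    · have h1 := c.hmono hs (right_mem_Icc.2 hL0) hs.2
      rwa [c.hφL] at h1
  have hcosineq : ∀ s ∈ Icc 0 L, Real.cos (Ω / 2) ≤ Real.cos (c.φ s - Ω / 2) := by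
    intro s hs
    have h := hφmem s hs
    rw [← Real.cos_abs (c.φ s - Ω / 2)]
    apply Real.cos_le_cos_of_nonneg_of_le_pi (abs_nonneg _)
    · linarith [hΩ.2, Real.pi_pos]
    · rw [abs_le]; exact ⟨by linarith [h.1], by linarith [h.2]⟩
  -- integral computation
  have hre : ((B - A) * (starRingEnd ℂ) (α * Complex.exp (((Ω / 2 : ℝ) : ℂ) * Complex.I))).re
      = ∫ s in (0:ℝ)..L, Real.cos (c.φ s - Ω / 2) := by
    rw [← hftc, ← intervalIntegral.integral_mul_const]
    rw [intervalIntegral.integral_of_le hL0, intervalIntegral.integral_of_le hL0]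
    rw [show ((∫ (x : ℝ) in Ioc 0 L, f' x * (starRingEnd ℂ)
          (α * Complex.exp (((Ω / 2:ℝ):ℂ) * Complex.I)) ∂MeasureTheory.volume).re)
        = RCLike.re (∫ (x : ℝ) in Ioc 0 L, f' x * (starRingEnd ℂ)
          (α * Complex.exp (((Ω / 2:ℝ):ℂ) * Complex.I)) ∂MeasureTheory.volume) from rfl,
      ← integral_re]
    · exact MeasureTheory.integral_congr_ae (Filter.Eventually.of_forall fun s => (hpt s))
    · have : IntervalIntegrable (fun s => f' s *
          (starRingEnd ℂ) (α * Complex.exp (((Ω / 2 : ℝ) : ℂ) * Complex.I)))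
          MeasureTheory.volume 0 L := hint.mul_const _
      exact (intervalIntegrable_iff_integrableOn_Ioc_of_le hL0).1 this
  rw [hre]
  have hcoscont : ContinuousOn (fun s => Real.cos (c.φ s - Ω / 2)) (Icc 0 L) :=
    Real.continuous_cos.comp_continuousOn (c.hcont.sub continuousOn_const)
  have hci : IntervalIntegrable (fun s => Real.cos (c.φ s - Ω / 2)) MeasureTheory.volume 0 L := by
    apply ContinuousOn.intervalIntegrable; rwa [uIcc_of_le hL0]
  calc L * Real.cos (Ω / 2) = ∫ _ in (0:ℝ)..L, Real.cos (Ω / 2) := by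
        rw [intervalIntegral.integral_const, smul_eq_mul, sub_zero]
    _ ≤ ∫ s in (0:ℝ)..L, Real.cos (c.φ s - Ω / 2) := by
        apply intervalIntegral.integral_mono_on hL0 intervalIntegrable_const hci
        exact hcosineq

/-- Uniform positive lower bound on the maximal curvature over 𝓔: with
`b̃ = ⟨B − A, α e^{iΩ/2}⟩` (the component of `B − A` along the bisector direction of
the endpoint tangents), the constant `δ = Ω cos(Ω/2)/b̃ > 0` bounds from below every
Lipschitz constant of the tangent angle of every curve of 𝓔. -/
theorem stmt19 (O A B : ℂ) (hOA : O ≠ A) (hOB : O ≠ B) (hAB : A ≠ B)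
    (α β : ℂ)
    (hα : α = (O - A) / (‖O - A‖ : ℂ))
    (hβ : β = (B - O) / (‖B - O‖ : ℂ))
    (Ω : ℝ) (hΩ : Ω ∈ Ioo 0 Real.pi)
    (hang : β = α * Complex.exp ((Ω : ℂ) * Complex.I))
    (hne : Nonempty (CurveE A B α Ω))
    (btilde δ : ℝ)
    (hb : btilde = ((B - A) *
      (starRingEnd ℂ) (α * Complex.exp (((Ω / 2 : ℝ) : ℂ) * Complex.I))).re)
    (hδ : δ = Ω * Real.cos (Ω / 2) / btilde) :
    0 < δ ∧
    ∀ c : CurveE A B α Ω, ∀ K : ℝ,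
      (∀ s ∈ Icc 0 c.L, ∀ t ∈ Icc 0 c.L, |c.φ s - c.φ t| ≤ K * |s - t|) →
      δ ≤ K := by

  have hα1 : ‖α‖ = 1 := by
    rw [hα, norm_div, Complex.norm_real, norm_norm,
      div_self (norm_ne_zero_iff.2 (sub_ne_zero.2 hOA))]
  have hcos : 0 < Real.cos (Ω / 2) := by
    apply Real.cos_pos_of_mem_Ioo
    constructor <;> [linarith [hΩ.1, Real.pi_pos]; linarith [hΩ.2]]
  have hkey : ∀ c : CurveE A B α Ω, c.L * Real.cos (Ω / 2) ≤ btilde := by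
    intro c; rw [hb]; exact keylem A B α Ω hΩ hα1 c
  obtain ⟨c0⟩ := hne
  have hbpos : 0 < btilde :=
    lt_of_lt_of_le (mul_pos c0.hL hcos) (hkey c0)
  refine ⟨by rw [hδ]; exact div_pos (mul_pos hΩ.1 hcos) hbpos, ?_⟩
  intro c K hK
  have hL := c.hL
  have hΩKL : Ω ≤ K * c.L := by
    have h := hK c.L (right_mem_Icc.2 hL.le) 0 (left_mem_Icc.2 hL.le)
    rw [c.hφL, c.hφ0, sub_zero, sub_zero, abs_of_nonneg hΩ.1.le, abs_of_nonneg hL.le] at h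
    exact h
  have h1 : δ ≤ Ω * Real.cos (Ω / 2) / (c.L * Real.cos (Ω / 2)) := by
    rw [hδ]
    exact div_le_div_of_nonneg_left (mul_nonneg hΩ.1.le hcos.le) (mul_pos hL hcos) (hkey c)
  have h2 : Ω * Real.cos (Ω / 2) / (c.L * Real.cos (Ω / 2)) = Ω / c.L := by
    rw [mul_div_mul_right _ _ hcos.ne']
  have h3 : Ω / c.L ≤ K := (div_le_iff₀ hL).2 hΩKL
  linarith [h1, h2 ▸ h1]
end
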